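/- arXiv:0709.2587 — 4 statements merged into one kernel-verified Lean document; each statement's English description precedes it below -/
import Mathlib

section
/- Let d ≥ 2, let L ⊆ ℝ^d be a full-rank lattice and let V ∈ (0, 2^d·det L]. Then for every K ∈ K_L with vol K = V one has diam K_L(V) ≤ diam K; that is, among all centrally symmetric convex bodies of volume V with no nonzero lattice point of L in their interior, the body K_L(V) = B_d(r_L(V)) ∩ DV(2L) has minimum diameter. -/
open MeasureTheory Metric

variable {d : ℕ}

/-- The lattice generated by an invertible matrix is closed. -/
lemma lat_closed (B : Matrix (Fin d) (Fin d) ℝ) (hB : IsUnit B.det) :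
    IsClosed {x : EuclideanSpace ℝ (Fin d) |
      ∃ z : Fin d → ℤ, x = WithLp.toLp 2 (B.mulVec (fun i => (z i : ℝ)))} := by
  have hZ : IsClosed {v : Fin d → ℝ | ∀ i, v i ∈ Set.range ((↑) : ℤ → ℝ)} := by
    have h := isClosed_set_pi
      (fun (i : Fin d) (_ : i ∈ Set.univ) => Int.isClosedEmbedding_coe_real.isClosed_range)
    simpa [Set.pi] using h
  set F : EuclideanSpace ℝ (Fin d) →ₗ[ℝ] (Fin d → ℝ) :=
    (Matrix.mulVecLin B⁻¹).comp (WithLp.linearEquiv 2 ℝ (Fin d → ℝ)).toLinearMap with hF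
  have hFc : Continuous F := F.continuous_of_finiteDimensional
  have hset : {x : EuclideanSpace ℝ (Fin d) |
      ∃ z : Fin d → ℤ, x = WithLp.toLp 2 (B.mulVec (fun i => (z i : ℝ)))}
      = F ⁻¹' {v : Fin d → ℝ | ∀ i, v i ∈ Set.range ((↑) : ℤ → ℝ)} := by
    ext x
    constructor
    · rintro ⟨z, rfl⟩
      have : F (WithLp.toLp 2 (B.mulVec (fun i => (z i : ℝ)))) = (fun i => (z i : ℝ)) := by
        show B⁻¹.mulVec (B.mulVec fun i => (z i : ℝ)) = _
        rw [Matrix.mulVec_mulVec, Matrix.nonsing_inv_mul B hB, Matrix.one_mulVec]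
      rw [Set.mem_preimage, this]
      exact fun i => ⟨z i, rfl⟩
    · intro hx
      choose z hz using hx
      refine ⟨z, ?_⟩
      have h1 : (fun i => (z i : ℝ)) = F x := funext fun i => hz i
      have : WithLp.toLp 2 (B.mulVec (F x)) = x := by
        show WithLp.toLp 2 (B.mulVec (B⁻¹.mulVec x.ofLp)) = x
        rw [Matrix.mulVec_mulVec, Matrix.mul_nonsing_inv B hB, Matrix.one_mulVec]
      rw [h1, this]
  rw [hset]
  exact hZ.preimage hFc

/-- Nonzero lattice vectors have norm bounded below. -/
lemma lat_min (B : Matrix (Fin d) (Fin d) ℝ) (hB : IsUnit B.det) :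
    ∃ c : ℝ, 0 < c ∧ ∀ z : Fin d → ℤ, z ≠ 0 →
      c ≤ ‖(WithLp.toLp 2 (B.mulVec (fun i => (z i : ℝ))))‖ := by
  set eqv := WithLp.linearEquiv 2 ℝ (Fin d → ℝ)
  set F : EuclideanSpace ℝ (Fin d) →ₗ[ℝ] EuclideanSpace ℝ (Fin d) :=
    eqv.symm.toLinearMap.comp ((Matrix.mulVecLin B).comp eqv.toLinearMap) with hF
  have hinj : Function.Injective F := by
    intro a b hab
    have h2 : B.mulVec (eqv a) = B.mulVec (eqv b) := by
      have := congrArg eqv hab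
      simpa [F] using this
    have := Matrix.mulVec_injective_iff_isUnit.2 ((Matrix.isUnit_iff_isUnit_det B).2 hB) h2
    exact eqv.injective this
  have hsurj : Function.Surjective F := (LinearMap.injective_iff_surjective).mp hinj
  let G : EuclideanSpace ℝ (Fin d) ≃ₗ[ℝ] EuclideanSpace ℝ (Fin d) :=
    LinearEquiv.ofBijective F ⟨hinj, hsurj⟩
  let Gc : EuclideanSpace ℝ (Fin d) ≃L[ℝ] EuclideanSpace ℝ (Fin d) :=
    G.toContinuousLinearEquiv
  have halip := Gc.antilipschitz
  set K : NNReal := ‖(Gc.symm : EuclideanSpace ℝ (Fin d) →L[ℝ] EuclideanSpace ℝ (Fin d))‖₊ with hK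
  set k : ℝ := (K : ℝ) with hk
  have hk0 : 0 ≤ k := K.coe_nonneg
  refine ⟨(k + 1)⁻¹, by positivity, ?_⟩
  intro z hz
  set v : EuclideanSpace ℝ (Fin d) := (WithLp.toLp 2 (fun i => (z i : ℝ)))
  have hv1 : (1 : ℝ) ≤ ‖v‖ := by
    obtain ⟨i, hi⟩ : ∃ i, z i ≠ 0 := by
      by_contra h
      push_neg at h
      exact hz (funext h)
    have h1 : (1 : ℝ) ≤ |(z i : ℝ)| := by
      have := Int.one_le_abs hi
      exact_mod_cast this
    have h2 : |(z i : ℝ)| ≤ ‖v‖ := by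
      have : Real.sqrt ((z i : ℝ) ^ 2) ≤ Real.sqrt (∑ j, ‖v j‖ ^ 2) := by
        apply Real.sqrt_le_sqrt
        have : ((z i : ℝ)) ^ 2 = ‖v i‖ ^ 2 := by simp [v]
        rw [this]
        exact Finset.single_le_sum (f := fun j => ‖v j‖ ^ 2)
          (fun j _ => sq_nonneg _) (Finset.mem_univ i)
      rwa [Real.sqrt_sq_eq_abs, ← EuclideanSpace.norm_eq] at this
    linarith
  have hle : ‖v‖ ≤ k * ‖F v‖ := by
    have h := halip.le_mul_dist v 0
    have hGv : Gc v = F v := rfl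
    have hG0 : Gc 0 = 0 := map_zero _
    rw [hGv, hG0, dist_zero_right, dist_zero_right] at h
    exact h
  have hFv : F v = (WithLp.toLp 2 (B.mulVec (fun i => (z i : ℝ)))) := rfl
  have hFnn : 0 ≤ ‖F v‖ := norm_nonneg _
  have h3 : 1 ≤ (k + 1) * ‖F v‖ := by nlinarith
  rw [← hFv]
  rw [inv_le_iff_one_le_mul₀ (by positivity : (0:ℝ) < k + 1)]
  linarith [h3]

lemma norm_le_norm_sub_iff_inner (x c : EuclideanSpace ℝ (Fin d)) :
    ‖x‖ ≤ ‖x - c‖ ↔ 2 * (inner ℝ x c : ℝ) ≤ ‖c‖ ^ 2 := by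
  have h2 : ‖x - c‖ ^ 2 = ‖x‖ ^ 2 - 2 * (inner ℝ x c : ℝ) + ‖c‖ ^ 2 := norm_sub_sq_real x c
  constructor
  · intro h
    nlinarith [norm_nonneg x, norm_nonneg (x - c)]
  · intro h
    nlinarith [norm_nonneg x, norm_nonneg (x - c)]

lemma dv_convex (L : Set (EuclideanSpace ℝ (Fin d))) :
    Convex ℝ {x : EuclideanSpace ℝ (Fin d) | ∀ y ∈ L, ‖x‖ ≤ ‖x - (2 : ℝ) • y‖} := by
  intro x₁ h₁ x₂ h₂ a b ha hb hab
  intro y hy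
  have e1 := (norm_le_norm_sub_iff_inner x₁ ((2:ℝ) • y)).1 (h₁ y hy)
  have e2 := (norm_le_norm_sub_iff_inner x₂ ((2:ℝ) • y)).1 (h₂ y hy)
  rw [norm_le_norm_sub_iff_inner]
  have : (inner ℝ (a • x₁ + b • x₂) ((2:ℝ) • y) : ℝ)
      = a * (inner ℝ x₁ ((2:ℝ) • y) : ℝ) + b * (inner ℝ x₂ ((2:ℝ) • y) : ℝ) := by
    rw [inner_add_left, real_inner_smul_left, real_inner_smul_left]
  rw [this]
  nlinarith

lemma exists_nearest (B : Matrix (Fin d) (Fin d) ℝ) (hB : IsUnit B.det)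
    (x : EuclideanSpace ℝ (Fin d)) :
    ∃ z₀ : Fin d → ℤ, ∀ z : Fin d → ℤ,
      ‖x - (WithLp.toLp 2 (B.mulVec (fun i => (z₀ i : ℝ))))‖
        ≤ ‖x - (WithLp.toLp 2 (B.mulVec (fun i => (z i : ℝ))))‖ := by
  set Λ : Set (EuclideanSpace ℝ (Fin d)) :=
    {w | ∃ z : Fin d → ℤ, w = WithLp.toLp 2 (B.mulVec (fun i => (z i : ℝ)))} with hΛ
  have hcl : IsClosed Λ := lat_closed B hB
  have h0 : (0 : EuclideanSpace ℝ (Fin d)) ∈ Λ := by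
    refine ⟨0, ?_⟩
    have : (fun i => ((0 : Fin d → ℤ) i : ℝ)) = (0 : Fin d → ℝ) := by
      funext i; simp
    rw [this, Matrix.mulVec_zero, WithLp.toLp_zero]
  set S := Λ ∩ closedBall x ‖x‖ with hS
  have hScpt : IsCompact S := (isCompact_closedBall x ‖x‖).inter_left hcl
  have hSne : S.Nonempty := ⟨0, h0, by simp [mem_closedBall, dist_comm, dist_zero_right]⟩
  obtain ⟨w₀, hw₀S, hmin⟩ := hScpt.exists_isMinOn hSne
    (f := fun w => ‖x - w‖) ((continuous_const.sub continuous_id).norm.continuousOn)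
  obtain ⟨z₀, hz₀⟩ := hw₀S.1
  refine ⟨z₀, fun z => ?_⟩
  rw [← hz₀]
  by_cases hzS : (WithLp.toLp 2 (B.mulVec (fun i => (z i : ℝ)))) ∈ closedBall x ‖x‖
  · exact hmin ⟨⟨z, rfl⟩, hzS⟩
  · have h1 : ‖x‖ < ‖x - (WithLp.toLp 2 (B.mulVec (fun i => (z i : ℝ))))‖ := by
      rw [mem_closedBall] at hzS
      push_neg at hzS
      calc ‖x‖ < dist (WithLp.toLp 2 (B.mulVec (fun i => (z i : ℝ)))) x := hzS
        _ = _ := by rw [dist_comm, dist_eq_norm]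
    have h2 : ‖x - w₀‖ ≤ ‖x‖ := by
      have := hmin ⟨h0, by simp [mem_closedBall, dist_comm, dist_zero_right]⟩
      simpa using this
    linarith

lemma neg_mem_interior_neg {s : Set (EuclideanSpace ℝ (Fin d))} {u : EuclideanSpace ℝ (Fin d)}
    (hu : u ∈ interior s) : -u ∈ interior (-s) := by
  have h := (Homeomorph.neg (EuclideanSpace ℝ (Fin d))).image_interior s
  have hmem : -u ∈ (Homeomorph.neg (EuclideanSpace ℝ (Fin d))) '' interior s := ⟨u, hu, rfl⟩
  rw [h] at hmem
  have himg : (Homeomorph.neg (EuclideanSpace ℝ (Fin d))) '' s = -s := by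
    ext w
    constructor
    · rintro ⟨u', hu', rfl⟩
      simpa [Set.mem_neg] using hu'
    · intro hw
      exact ⟨-w, by simpa [Set.mem_neg] using hw, by simp⟩
  rwa [himg] at hmem

set_option maxHeartbeats 2000000 in
/-- The isodiametric problem with lattice-point constraints: the body
`K_L(V) = B_d(r_L(V)) ∩ DV(2L)` has minimum diameter among all centrally symmetric
convex bodies of volume `V` with no nonzero point of `L` in their interior. -/
theorem isodiametric_lattice_min_diam
    (d : ℕ) (hd : 2 ≤ d)
    (A : Matrix (Fin d) (Fin d) ℝ) (hA : IsUnit A.det)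
    (L : Set (EuclideanSpace ℝ (Fin d)))
    (hL : L = {x | ∃ z : Fin d → ℤ, x = WithLp.toLp 2 (A.mulVec (fun i => (z i : ℝ)))})
    -- `DV2L` is the Dirichlet–Voronoi cell of the lattice `2L`
    (DV2L : Set (EuclideanSpace ℝ (Fin d)))
    (hDV : DV2L = {x | ∀ y ∈ L, ‖x‖ ≤ ‖x - (2 : ℝ) • y‖})
    -- `μ` is the covering radius (inhomogeneous minimum) of `L`
    (μ : ℝ) (hμ : μ = ⨆ x : EuclideanSpace ℝ (Fin d), infDist x L)
    (V : ℝ) (hV0 : 0 < V) (hV1 : V ≤ 2 ^ d * |A.det|)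
    -- `r = r_L(V)`, the unique radius in `(0, 2μ(L)]` such that
    -- `vol (B_d(r) ∩ DV(2L)) = V`
    (r : ℝ) (hr0 : 0 < r) (hrμ : r ≤ 2 * μ)
    (hrV : volume (closedBall (0 : EuclideanSpace ℝ (Fin d)) r ∩ DV2L)
      = ENNReal.ofReal V)
    -- `K ∈ K_L` with `vol K = V`
    (K : Set (EuclideanSpace ℝ (Fin d)))
    (hKcpt : IsCompact K) (hKconv : Convex ℝ K) (hKsymm : K = -K)
    (hKadm : ∀ y ∈ L, y ≠ 0 → y ∉ interior K)
    (hKvol : volume K = ENNReal.ofReal V) :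
    diam (closedBall (0 : EuclideanSpace ℝ (Fin d)) r ∩ DV2L) ≤ diam K := by
  set B : Matrix (Fin d) (Fin d) ℝ := (2 : ℝ) • A with hB
  have hBdet : IsUnit B.det := by
    rw [hB, Matrix.det_smul]
    exact (isUnit_iff_ne_zero.2 (by positivity)).mul hA
  set ec : (Fin d → ℤ) → EuclideanSpace ℝ (Fin d) := fun z => (WithLp.toLp 2 (B.mulVec (fun i => (z i : ℝ)))) with hec
  set ea : (Fin d → ℤ) → EuclideanSpace ℝ (Fin d) := fun z => (WithLp.toLp 2 (A.mulVec (fun i => (z i : ℝ)))) with hea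
  have hec2 : ∀ z, ec z = (2 : ℝ) • ea z := by
    intro z
    show WithLp.toLp 2 (((2:ℝ) • A).mulVec fun i => (z i : ℝ)) = (2:ℝ) • WithLp.toLp 2 (A.mulVec fun i => (z i : ℝ))
    rw [Matrix.smul_mulVec, WithLp.toLp_smul]
  have hmemL : ∀ z, ea z ∈ L := by intro z; rw [hL]; exact ⟨z, rfl⟩
  have hLmem : ∀ y ∈ L, ∃ z, y = ea z := by intro y hy; rw [hL] at hy; exact hy
  have hecadd : ∀ z₁ z₂, ec z₁ + ec z₂ = ec (z₁ + z₂) := by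
    intro z₁ z₂
    have harg : (fun i => ((z₁ + z₂) i : ℝ))
        = (fun i => (z₁ i : ℝ)) + (fun i => (z₂ i : ℝ)) := by
      funext i
      simp [Pi.add_apply]
    show WithLp.toLp 2 (B.mulVec _) + WithLp.toLp 2 (B.mulVec _) = WithLp.toLp 2 (B.mulVec _)
    rw [harg, Matrix.mulVec_add, WithLp.toLp_add]
  have hecsub : ∀ z₁ z₂, ec z₁ - ec z₂ = ec (z₁ - z₂) := by
    intro z₁ z₂
    have harg : (fun i => ((z₁ - z₂) i : ℝ))
        = (fun i => (z₁ i : ℝ)) - (fun i => (z₂ i : ℝ)) := by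
      funext i
      simp [Pi.sub_apply]
    show WithLp.toLp 2 (B.mulVec _) - WithLp.toLp 2 (B.mulVec _) = WithLp.toLp 2 (B.mulVec _)
    rw [harg, Matrix.mulVec_sub, WithLp.toLp_sub]
  have hec0 : ec 0 = 0 := by
    show WithLp.toLp 2 (B.mulVec _) = 0
    have : (fun i => ((0 : Fin d → ℤ) i : ℝ)) = (0 : Fin d → ℝ) := by funext i; simp
    rw [this, Matrix.mulVec_zero, WithLp.toLp_zero]
  have heainj : ∀ z, ea z = 0 → z = 0 := by
    intro z h
    have h0 : ea 0 = 0 := by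
      show WithLp.toLp 2 (A.mulVec _) = 0
      have : (fun i => ((0 : Fin d → ℤ) i : ℝ)) = (0 : Fin d → ℝ) := by funext i; simp
      rw [this, Matrix.mulVec_zero, WithLp.toLp_zero]
    have := Matrix.mulVec_injective_iff_isUnit.2 ((Matrix.isUnit_iff_isUnit_det A).2 hA)
      (show A.mulVec _ = A.mulVec _ from congrArg WithLp.ofLp (h.trans h0.symm))
    funext i
    have := congrFun this i
    exact_mod_cast this
  -- membership criterion for DV2L
  have hDVmem : ∀ x : EuclideanSpace ℝ (Fin d), x ∈ DV2L ↔ ∀ z, ‖x‖ ≤ ‖x - ec z‖ := by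
    intro x
    rw [hDV]
    constructor
    · intro h z
      have := h (ea z) (hmemL z)
      rwa [← hec2] at this
    · intro h y hy
      obtain ⟨z, rfl⟩ := hLmem y hy
      rw [← hec2]
      exact h z
  -- nearest point projection into DV2L
  have hproj : ∀ x : EuclideanSpace ℝ (Fin d), ∃ z₀, x - ec z₀ ∈ DV2L := by
    intro x
    obtain ⟨z₀, hz₀⟩ := exists_nearest B hBdet x
    refine ⟨z₀, (hDVmem _).2 fun z => ?_⟩
    have h1 : x - ec z₀ - ec z = x - ec (z₀ + z) := by
      rw [sub_sub, hecadd]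
    rw [h1]
    exact hz₀ (z₀ + z)
  -- K is contained in the ball of radius diam K / 2
  have hKb : Bornology.IsBounded K := hKcpt.isBounded
  have hKsub : K ⊆ closedBall 0 (diam K / 2) := by
    intro x hx
    have hnx : -x ∈ K := by
      rw [hKsymm]
      simpa [Set.mem_neg] using hx
    have hdd : dist x (-x) ≤ diam K := dist_le_diam_of_mem hKb hx hnx
    have h2 : dist x (-x) = 2 * ‖x‖ := by
      rw [dist_eq_norm, sub_neg_eq_add, ← two_smul ℝ x, norm_smul]
      simp
    rw [mem_closedBall, dist_zero_right]
    linarith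
  -- the cells and translated pieces
  set Q : (Fin d → ℤ) → Set (EuclideanSpace ℝ (Fin d)) :=
    fun z => K ∩ {x | x - ec z ∈ DV2L} with hQ
  set P : (Fin d → ℤ) → Set (EuclideanSpace ℝ (Fin d)) :=
    fun z => ((fun w => ec z + w) ⁻¹' K) ∩ DV2L with hP
  have hQP : ∀ z, P z = (fun w => ec z + w) ⁻¹' (Q z) := by
    intro z
    ext w
    simp only [hP, hQ, Set.mem_inter_iff, Set.mem_preimage, Set.mem_setOf_eq,
      add_sub_cancel_left]
  have hvolPQ : ∀ z, volume (P z) = volume (Q z) := by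
    intro z
    rw [hQP z]
    exact measure_preimage_add volume (ec z) (Q z)
  have hKcover : K ⊆ ⋃ z, Q z := by
    intro x hx
    obtain ⟨z₀, hz₀⟩ := hproj x
    exact Set.mem_iUnion.2 ⟨z₀, hx, hz₀⟩
  have hPsub : ∀ z, P z ⊆ closedBall 0 (diam K / 2) ∩ DV2L := by
    intro z w hw
    obtain ⟨hwK, hwDV⟩ := hw
    refine ⟨?_, hwDV⟩
    have h1 : ‖w‖ ≤ ‖w - ec (-z)‖ := (hDVmem w).1 hwDV (-z)
    have h2 : ec (-z) = -ec z := by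
      have h := hecsub 0 z
      rw [hec0] at h
      simp only [zero_sub] at h
      exact h.symm
    rw [h2, sub_neg_eq_add, add_comm] at h1
    have h3 : ‖ec z + w‖ ≤ diam K / 2 := by
      have := hKsub hwK
      rwa [mem_closedBall, dist_zero_right] at this
    rw [mem_closedBall, dist_zero_right]
    linarith
  -- frontier of K is null
  have hfr : volume (frontier K) = 0 := hKconv.addHaar_frontier volume
  have hfrz : ∀ z : Fin d → ℤ, volume ((fun w => ec z + w) ⁻¹' frontier K) = 0 := by
    intro z
    rw [measure_preimage_add]
    exact hfr
  -- pairwise a.e. disjointness of the pieces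
  have hdisj : Pairwise (Function.onFun (AEDisjoint volume) P) := by
    intro z₁ z₂ hne
    have hsub2 : P z₁ ∩ P z₂ ⊆
        ((fun w => ec z₁ + w) ⁻¹' frontier K) ∪ ((fun w => ec z₂ + w) ⁻¹' frontier K) := by
      intro w hw
      obtain ⟨⟨ha, _⟩, ⟨hb, _⟩⟩ := hw
      have hnotboth : ¬(ec z₁ + w ∈ interior K ∧ ec z₂ + w ∈ interior K) := by
        rintro ⟨hia, hib⟩
        have hnb : -(ec z₂ + w) ∈ interior K := by
          have := neg_mem_interior_neg hib
          rwa [← hKsymm] at this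
        have hm : (1/2 : ℝ) • (ec z₁ + w) + (1/2 : ℝ) • (-(ec z₂ + w)) ∈ interior K :=
          hKconv.interior hia hnb (by norm_num) (by norm_num) (by norm_num)
        have hmeq : (1/2 : ℝ) • (ec z₁ + w) + (1/2 : ℝ) • (-(ec z₂ + w))
            = ea (z₁ - z₂) := by
          rw [smul_neg, ← sub_eq_add_neg, ← smul_sub]
          have h4 : (ec z₁ + w) - (ec z₂ + w) = ec z₁ - ec z₂ := by abel
          rw [h4, hecsub, hec2, smul_smul]
          norm_num
        rw [hmeq] at hm
        have hyne : ea (z₁ - z₂) ≠ 0 := by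
          intro h0
          have := heainj _ h0
          exact hne (by rwa [sub_eq_zero] at this)
        exact hKadm _ (hmemL (z₁ - z₂)) hyne hm
      have hfrK : frontier K = K \ interior K := by
        rw [hKcpt.isClosed.frontier_eq]
      rcases not_and_or.mp hnotboth with h | h
      · exact Or.inl (by rw [Set.mem_preimage, hfrK]; exact ⟨ha, h⟩)
      · exact Or.inr (by rw [Set.mem_preimage, hfrK]; exact ⟨hb, h⟩)
    have : volume (P z₁ ∩ P z₂) = 0 := by
      refine measure_mono_null hsub2 ?_
      exact measure_union_null (hfrz z₁) (hfrz z₂)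
    exact this
  -- DV2L is closed
  have hDVcl : IsClosed DV2L := by
    rw [hDV]
    have : {x : EuclideanSpace ℝ (Fin d) | ∀ y ∈ L, ‖x‖ ≤ ‖x - (2:ℝ) • y‖}
        = ⋂ y ∈ L, {x : EuclideanSpace ℝ (Fin d) | ‖x‖ ≤ ‖x - (2:ℝ) • y‖} := by
      ext x
      simp [Set.mem_iInter]
    rw [this]
    exact isClosed_biInter fun y _ =>
      isClosed_le continuous_norm ((continuous_id.sub continuous_const).norm)
  have hPnm : ∀ z, NullMeasurableSet (P z) volume := by
    intro z
    have : IsClosed (P z) :=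
      (hKcpt.isClosed.preimage (continuous_const.add continuous_id)).inter hDVcl
    exact this.measurableSet.nullMeasurableSet
  -- key inequality : V ≤ vol (B(diam K / 2) ∩ DV2L)
  have key1 : ENNReal.ofReal V ≤ volume (closedBall (0 : EuclideanSpace ℝ (Fin d)) (diam K / 2) ∩ DV2L) := by
    calc ENNReal.ofReal V = volume K := hKvol.symm
      _ ≤ volume (⋃ z, Q z) := measure_mono hKcover
      _ ≤ ∑' z, volume (Q z) := measure_iUnion_le _
      _ = ∑' z, volume (P z) := by
          exact (tsum_congr fun z => (hvolPQ z)).symm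
      _ = volume (⋃ z, P z) := (measure_iUnion₀ hdisj hPnm).symm
      _ ≤ _ := measure_mono (Set.iUnion_subset hPsub)
  -- small ball inside DV2L
  obtain ⟨c, hc0, hcmin⟩ := lat_min B hBdet
  have hball : ∀ x : EuclideanSpace ℝ (Fin d), ‖x‖ ≤ c / 2 → x ∈ DV2L := by
    intro x hx
    refine (hDVmem x).2 fun z => ?_
    by_cases hz : z = 0
    · rw [hz, hec0, sub_zero]
    · have h1 : c ≤ ‖ec z‖ := hcmin z hz
      have h2 : ‖ec z‖ - ‖x‖ ≤ ‖ec z - x‖ := norm_sub_norm_le _ _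
      rw [norm_sub_rev] at h2
      linarith
  have hDVconv : Convex ℝ DV2L := by
    rw [hDV]
    exact dv_convex L
  have h0DV : (0 : EuclideanSpace ℝ (Fin d)) ∈ DV2L := by
    refine (hDVmem 0).2 fun z => ?_
    simp
  -- key2 : r ≤ diam K / 2
  have key2 : r ≤ diam K / 2 := by
    by_contra hcon
    push_neg at hcon
    set s : ℝ := (diam K / 2 + r) / 2 with hs
    have hdiamnn : 0 ≤ diam K := diam_nonneg
    have hs0 : 0 < s := by positivity
    have hsr : s < r := by rw [hs]; linarith
    have hsD : diam K / 2 < s := by rw [hs]; linarith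
    -- find p ∈ DV2L with s < ‖p‖ ≤ r
    obtain ⟨p, hpDV, hps, hpr⟩ :
        ∃ p ∈ DV2L, s < ‖p‖ ∧ ‖p‖ ≤ r := by
      have hμ2 : s / 2 < ⨆ x : EuclideanSpace ℝ (Fin d), infDist x L := by
        rw [← hμ]; linarith
      obtain ⟨w, hw⟩ := exists_lt_of_lt_ciSup hμ2
      set x : EuclideanSpace ℝ (Fin d) := (2 : ℝ) • w with hx
      obtain ⟨z₀, hz₀⟩ := exists_nearest B hBdet x
      set q : EuclideanSpace ℝ (Fin d) := x - ec z₀ with hq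
      have hqDV : q ∈ DV2L := by
        refine (hDVmem q).2 fun z => ?_
        have h1 : q - ec z = x - ec (z₀ + z) := by
          rw [hq, sub_sub, hecadd]
        rw [h1]
        exact hz₀ (z₀ + z)
      have hqs : s < ‖q‖ := by
        have h1 : q = (2 : ℝ) • (w - ea z₀) := by
          rw [hq, hx, hec2, smul_sub]
        have h2 : infDist w L ≤ ‖w - ea z₀‖ := by
          have := infDist_le_dist_of_mem (hmemL z₀) (x := w)
          rwa [dist_eq_norm] at this
        have h3 : ‖q‖ = 2 * ‖w - ea z₀‖ := by
          rw [h1, norm_smul]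
          simp
        linarith
      by_cases hqr : ‖q‖ ≤ r
      · exact ⟨q, hqDV, hqs, hqr⟩
      · push_neg at hqr
        have hq0 : 0 < ‖q‖ := lt_trans hs0 hqs
        set a : ℝ := r / ‖q‖ with ha
        have ha0 : 0 ≤ a := by positivity
        have ha1 : a ≤ 1 := by
          rw [ha, div_le_one hq0]
          linarith
        have hmem : a • q + (1 - a) • (0 : EuclideanSpace ℝ (Fin d)) ∈ DV2L :=
          hDVconv hqDV h0DV ha0 (by linarith) (by ring)
        rw [smul_zero, add_zero] at hmem
        have hnorm : ‖a • q‖ = r := by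
          rw [norm_smul, Real.norm_eq_abs, abs_of_nonneg ha0, ha]
          field_simp
        exact ⟨a • q, hmem, by rw [hnorm]; exact hsr, le_of_eq hnorm⟩
    -- sets
    set Sr := closedBall (0 : EuclideanSpace ℝ (Fin d)) r ∩ DV2L with hSr
    set Sc := closedBall (0 : EuclideanSpace ℝ (Fin d)) (diam K / 2) ∩ DV2L with hSc
    have hsub : Sc ⊆ Sr :=
      Set.inter_subset_inter_left _ (closedBall_subset_closedBall (by linarith))
    have hScm : NullMeasurableSet Sc volume :=
      ((Metric.isClosed_closedBall.inter hDVcl).measurableSet).nullMeasurableSet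
    have hScfin : volume Sc ≠ ⊤ := by
      have h1 : volume Sc ≤ volume (closedBall (0 : EuclideanSpace ℝ (Fin d)) (diam K / 2)) :=
        measure_mono Set.inter_subset_left
      exact ne_top_of_le_ne_top measure_closedBall_lt_top.ne h1
    have hdiff0 : volume (Sr \ Sc) = 0 := by
      rw [measure_diff hsub hScm hScfin, hSr, hrV]
      exact tsub_eq_zero_of_le key1
    -- construct a ball inside Sr \ Sc
    set ε : ℝ := min (c / 2) r with hε
    have hε0 : 0 < ε := lt_min (by linarith) hr0
    have hεr : ε ≤ r := min_le_right _ _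
    have hεc : ε ≤ c / 2 := min_le_left _ _
    set t : ℝ := (‖p‖ - s) / (‖p‖ + ε) with ht
    have hpε0 : 0 < ‖p‖ + ε := by positivity
    have ht0 : 0 < t := by
      apply div_pos
      · linarith
      · exact hpε0
    have ht1 : t ≤ 1 := by
      rw [ht, div_le_one hpε0]
      linarith
    set c₀ : EuclideanSpace ℝ (Fin d) := (1 - t) • p with hc₀
    have hballsub : ball c₀ (t * ε) ⊆ Sr \ Sc := by
      intro u hu
      rw [mem_ball, dist_eq_norm] at hu
      set v : EuclideanSpace ℝ (Fin d) := t⁻¹ • (u - c₀) with hv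
      have hvn : ‖v‖ < ε := by
        rw [hv, norm_smul, Real.norm_eq_abs, abs_of_pos (inv_pos.2 ht0)]
        rw [inv_mul_lt_iff₀ ht0]
        exact hu
      have hueq : u = (1 - t) • p + t • v := by
        rw [hv, smul_inv_smul₀ (ne_of_gt ht0), hc₀]
        abel
      have hvDV : v ∈ DV2L := hball v (by linarith)
      have huDV : u ∈ DV2L := by
        rw [hueq]
        exact hDVconv hpDV hvDV (by linarith) (le_of_lt ht0) (by ring)
      have hunorm : ‖u‖ ≤ r := by
        rw [hueq]
        calc ‖(1 - t) • p + t • v‖ ≤ ‖(1 - t) • p‖ + ‖t • v‖ := norm_add_le _ _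
          _ = (1 - t) * ‖p‖ + t * ‖v‖ := by
              rw [norm_smul, norm_smul, Real.norm_eq_abs, Real.norm_eq_abs,
                abs_of_nonneg (by linarith : (0:ℝ) ≤ 1 - t), abs_of_pos ht0]
          _ ≤ (1 - t) * r + t * ε := by
              have h1 : (1 - t) * ‖p‖ ≤ (1 - t) * r :=
                mul_le_mul_of_nonneg_left hpr (by linarith)
              have h2 : t * ‖v‖ ≤ t * ε := mul_le_mul_of_nonneg_left (le_of_lt hvn) (le_of_lt ht0)
              linarith
          _ ≤ r := by
              have h3 : t * ε ≤ t * r := mul_le_mul_of_nonneg_left hεr (le_of_lt ht0)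
              have h4 : (1 - t) * r + t * r = r := by ring
              linarith
      have hus : s ≤ ‖u‖ := by
        have h1 : ‖(1 - t) • p‖ ≤ ‖u‖ + ‖t • v‖ := by
          have := norm_add_le u (-(t • v))
          rw [norm_neg] at this
          have h2 : u + -(t • v) = (1 - t) • p := by
            rw [hueq]; abel
          rw [h2] at this
          exact this
        have h3 : ‖(1 - t) • p‖ = (1 - t) * ‖p‖ := by
          rw [norm_smul, Real.norm_eq_abs, abs_of_nonneg (by linarith : (0:ℝ) ≤ 1 - t)]
        have h4 : ‖t • v‖ = t * ‖v‖ := by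
          rw [norm_smul, Real.norm_eq_abs, abs_of_pos ht0]
        have h5 : (1 - t) * ‖p‖ - t * ε ≤ ‖u‖ := by
          have h6 : t * ‖v‖ ≤ t * ε := mul_le_mul_of_nonneg_left (le_of_lt hvn) (le_of_lt ht0)
          rw [h3, h4] at h1
          linarith
        have h7 : (1 - t) * ‖p‖ - t * ε = ‖p‖ - t * (‖p‖ + ε) := by ring
        have h8 : t * (‖p‖ + ε) = ‖p‖ - s := by
          rw [ht]
          field_simp
        linarith
      constructor
      · exact ⟨by rw [mem_closedBall, dist_zero_right]; exact hunorm, huDV⟩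
      · intro huSc
        have := huSc.1
        rw [mem_closedBall, dist_zero_right] at this
        linarith
    have hpos : 0 < volume (ball c₀ (t * ε)) :=
      measure_ball_pos volume c₀ (by positivity)
    have : volume (ball c₀ (t * ε)) = 0 :=
      measure_mono_null hballsub hdiff0
    rw [this] at hpos
    exact lt_irrefl _ hpos
  -- conclusion
  have hfin1 : diam (closedBall (0 : EuclideanSpace ℝ (Fin d)) r ∩ DV2L)
      ≤ diam (closedBall (0 : EuclideanSpace ℝ (Fin d)) r) :=
    diam_mono Set.inter_subset_left isBounded_closedBall
  have hfin2 : diam (closedBall (0 : EuclideanSpace ℝ (Fin d)) r) ≤ 2 * r :=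
    diam_closedBall (le_of_lt hr0)
  linarith
end

section
/- Let d ≥ 2, let L ⊆ ℝ^d be a full-rank lattice and let V ∈ (0, 2^d·det L] be such that r_L(V) ≤ λ(L). Then K_L(V) = B_d(r_L(V)), and the ball B_d(r_L(V)) is the unique extremal body: every K ∈ K_L with vol K = V and diam K = 2·r_L(V) satisfies K = B_d(r_L(V)). -/
open MeasureTheory Metric

/-- If `r_L(V) ≤ λ(L)` (the homogeneous minimum), then `K_L(V) = B_d(r_L(V))` and the
ball is the unique extremal body. The hypothesis `r ≤ λ(L)` is expressed as
`r ≤ ‖y‖` for every nonzero `y ∈ L`. -/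
theorem unique_extremal_small_radius
    (d : ℕ) (hd : 2 ≤ d)
    (A : Matrix (Fin d) (Fin d) ℝ) (hA : IsUnit A.det)
    (L : Set (EuclideanSpace ℝ (Fin d)))
    (hL : L = {x | ∃ z : Fin d → ℤ, x = WithLp.toLp 2 (A.mulVec (fun i => (z i : ℝ)))})
    -- `DV2L` is the Dirichlet–Voronoi cell of the lattice `2L`
    (DV2L : Set (EuclideanSpace ℝ (Fin d)))
    (hDV : DV2L = {x | ∀ y ∈ L, ‖x‖ ≤ ‖x - (2 : ℝ) • y‖})
    -- `μ` is the covering radius (inhomogeneous minimum) of `L`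
    (μ : ℝ) (hμ : μ = ⨆ x : EuclideanSpace ℝ (Fin d), infDist x L)
    (V : ℝ) (hV0 : 0 < V) (hV1 : V ≤ 2 ^ d * |A.det|)
    -- `r = r_L(V)`
    (r : ℝ) (hr0 : 0 < r) (hrμ : r ≤ 2 * μ)
    (hrV : volume (closedBall (0 : EuclideanSpace ℝ (Fin d)) r ∩ DV2L)
      = ENNReal.ofReal V)
    -- `r_L(V) ≤ λ(L)`
    (hrlam : ∀ y ∈ L, y ≠ 0 → r ≤ ‖y‖) :
    closedBall (0 : EuclideanSpace ℝ (Fin d)) r ∩ DV2L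
      = closedBall (0 : EuclideanSpace ℝ (Fin d)) r ∧
    ∀ K : Set (EuclideanSpace ℝ (Fin d)),
      IsCompact K → Convex ℝ K → K = -K →
      (∀ y ∈ L, y ≠ 0 → y ∉ interior K) →
      volume K = ENNReal.ofReal V → diam K = 2 * r →
      K = closedBall (0 : EuclideanSpace ℝ (Fin d)) r := by
  have hB : closedBall (0 : EuclideanSpace ℝ (Fin d)) r ⊆ DV2L := by
    intro x hx
    have hxr : ‖x‖ ≤ r := mem_closedBall_zero_iff.mp hx
    rw [hDV]
    intro y hy
    by_cases hy0 : y = 0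
    · simp [hy0]
    · have h1 : r ≤ ‖y‖ := hrlam y hy hy0
      have h2 : ‖(2 : ℝ) • y‖ = 2 * ‖y‖ := by
        rw [norm_smul]; simp
      have h3 : ‖(2 : ℝ) • y‖ - ‖x‖ ≤ ‖(2 : ℝ) • y - x‖ := norm_sub_norm_le _ _
      rw [norm_sub_rev] at h3
      linarith
  have hinter : closedBall (0 : EuclideanSpace ℝ (Fin d)) r ∩ DV2L
      = closedBall (0 : EuclideanSpace ℝ (Fin d)) r := Set.inter_eq_left.mpr hB
  have hvolB : volume (closedBall (0 : EuclideanSpace ℝ (Fin d)) r) = ENNReal.ofReal V := by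
    rw [← hinter]; exact hrV
  refine ⟨hinter, ?_⟩
  intro K hKc hKconv hKsym _ hKvol hKdiam
  have hsub : K ⊆ closedBall (0 : EuclideanSpace ℝ (Fin d)) r := by
    intro x hx
    have hnx : -x ∈ K := by
      rw [hKsym]; exact Set.neg_mem_neg.mpr hx
    have hdist : dist x (-x) = 2 * ‖x‖ := by
      rw [dist_eq_norm, sub_neg_eq_add, ← two_smul ℝ, norm_smul]; simp
    have hle : dist x (-x) ≤ diam K := dist_le_diam_of_mem hKc.isBounded hx hnx
    rw [hdist, hKdiam] at hle
    exact mem_closedBall_zero_iff.mpr (by linarith)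
  have hKm : MeasurableSet K := hKc.measurableSet
  have hdiff : volume (closedBall (0 : EuclideanSpace ℝ (Fin d)) r \ K) = 0 := by
    rw [measure_diff hsub hKm.nullMeasurableSet
      (by rw [hKvol]; exact ENNReal.ofReal_ne_top), hvolB, hKvol, tsub_self]
  refine Set.Subset.antisymm hsub ?_
  intro x hx
  by_contra hxK
  obtain ⟨ε, hε, hball⟩ := Metric.isOpen_iff.mp hKc.isClosed.isOpen_compl x hxK
  have hx' : x ∈ closure (ball (0 : EuclideanSpace ℝ (Fin d)) r) := by
    rw [closure_ball _ hr0.ne']; exact hx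
  obtain ⟨z, hz, hdz⟩ := Metric.mem_closure_iff.mp hx' ε hε
  have hne : (ball x ε ∩ ball (0 : EuclideanSpace ℝ (Fin d)) r).Nonempty :=
    ⟨z, mem_ball.mpr (by rwa [dist_comm]), hz⟩
  have hpos : 0 < volume (ball x ε ∩ ball (0 : EuclideanSpace ℝ (Fin d)) r) :=
    (isOpen_ball.inter isOpen_ball).measure_pos volume hne
  have hsub2 : ball x ε ∩ ball (0 : EuclideanSpace ℝ (Fin d)) r
      ⊆ closedBall (0 : EuclideanSpace ℝ (Fin d)) r \ K := by
    rintro w ⟨h1, h2⟩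
    exact ⟨ball_subset_closedBall h2, hball h1⟩
  exact hpos.ne' (measure_mono_null hsub2 hdiff)
end

section
/- Let K ⊆ ℝ³ be a compact convex set with K = −K containing no nonzero integer point in its interior, and set D = diam K. If 2 ≤ D ≤ 2√2, then vol K ≤ 2π(−D³/6 + 3D²/4 − 1). -/
open MeasureTheory Metric Real

lemma disk_vol (s : ℝ) :
    volume {y : Fin 2 → ℝ | y 0 ^ 2 + y 1 ^ 2 ≤ s} = ENNReal.ofReal (π * s) := by
  rcases lt_or_ge s 0 with hs | hs
  · have : {y : Fin 2 → ℝ | y 0 ^ 2 + y 1 ^ 2 ≤ s} = ∅ := by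
      ext y; simp only [Set.mem_setOf_eq, Set.mem_empty_iff_false, iff_false]
      nlinarith [sq_nonneg (y 0), sq_nonneg (y 1)]
    rw [this, measure_empty, Eq.comm, ENNReal.ofReal_eq_zero]
    nlinarith [Real.pi_pos]
  · have hA : MeasurableSet {y : Fin 2 → ℝ | y 0 ^ 2 + y 1 ^ 2 ≤ s} := by
      apply measurableSet_le (by fun_prop) measurable_const
    rw [← (EuclideanSpace.volume_preserving_symm_measurableEquiv_toLp (Fin 2)).measure_preimage
      hA.nullMeasurableSet]
    have : (MeasurableEquiv.toLp 2 (Fin 2 → ℝ)).symm ⁻¹' {y : Fin 2 → ℝ | y 0 ^ 2 + y 1 ^ 2 ≤ s}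
        = Metric.closedBall (0 : EuclideanSpace ℝ (Fin 2)) (Real.sqrt s) := by
      ext x
      simp only [Set.mem_preimage, Set.mem_setOf_eq, Metric.mem_closedBall, dist_zero_right,
        MeasurableEquiv.toLp_symm_apply]
      rw [show ‖x‖ = Real.sqrt (x 0 ^ 2 + x 1 ^ 2) by
        rw [EuclideanSpace.norm_eq]; congr 1; simp [Fin.sum_univ_two, sq_abs]]
      constructor
      · intro h; exact Real.sqrt_le_sqrt h
      · intro h
        exact (Real.sqrt_le_sqrt_iff (by positivity)).mp h
    rw [this, EuclideanSpace.volume_closedBall]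
    rw [show Fintype.card (Fin 2) = 2 from rfl]
    rw [show ((2:ℕ):ℝ)/2 + 1 = 2 by norm_num, Real.Gamma_two]
    rw [← ENNReal.ofReal_pow (Real.sqrt_nonneg s), Real.sq_sqrt hs,
      ← ENNReal.ofReal_mul hs]
    congr 1
    rw [Real.sq_sqrt Real.pi_nonneg]
    ring
lemma slab_vol (r : ℝ) (i : Fin 3) (S : Set ℝ) (hS : MeasurableSet S) :
    volume {x : Fin 3 → ℝ | (∑ j, x j ^ 2) ≤ r ^ 2 ∧ x i ∈ S}
      = ∫⁻ t in S, ENNReal.ofReal (π * (r ^ 2 - t ^ 2)) := by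
  have hA : MeasurableSet {x : Fin 3 → ℝ | (∑ j, x j ^ 2) ≤ r ^ 2 ∧ x i ∈ S} := by
    apply MeasurableSet.inter
    · exact measurableSet_le (Finset.univ.measurable_sum
        (fun j _ => (measurable_pi_apply j).pow_const 2)) measurable_const
    · exact (measurable_pi_apply i) hS
  have hmp := (volume_preserving_piFinSuccAbove (fun _ : Fin 3 => ℝ) i).symm
  rw [← hmp.measure_preimage hA.nullMeasurableSet]
  have hpre : (MeasurableEquiv.piFinSuccAbove (fun _ : Fin 3 => ℝ) i).symm ⁻¹'
      {x : Fin 3 → ℝ | (∑ j, x j ^ 2) ≤ r ^ 2 ∧ x i ∈ S}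
      = {p : ℝ × (Fin 2 → ℝ) | (p.1 ^ 2 + (p.2 0 ^ 2 + p.2 1 ^ 2) ≤ r ^ 2) ∧ p.1 ∈ S} := by
    ext p
    simp only [Set.mem_preimage, Set.mem_setOf_eq, MeasurableEquiv.piFinSuccAbove_symm_apply]
    rw [Fin.sum_univ_succAbove (fun j => ((Fin.insertNthEquiv (fun _ => ℝ) i) p j) ^ 2) i]
    simp [Fin.insertNthEquiv, Fin.sum_univ_two]
  rw [hpre]
  have hM : MeasurableSet {p : ℝ × (Fin 2 → ℝ) |
      (p.1 ^ 2 + (p.2 0 ^ 2 + p.2 1 ^ 2) ≤ r ^ 2) ∧ p.1 ∈ S} := by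
    apply MeasurableSet.inter
    · have hm2 : Measurable (fun p : ℝ × (Fin 2 → ℝ) => p.1 ^ 2 + (p.2 0 ^ 2 + p.2 1 ^ 2)) := by
        fun_prop
      exact measurableSet_le hm2 measurable_const
    · exact measurable_fst hS
  rw [show (volume : Measure (ℝ × (Fin 2 → ℝ))) = (volume : Measure ℝ).prod volume from rfl]
  rw [Measure.prod_apply hM]
  have hslice : ∀ t : ℝ, volume (Prod.mk t ⁻¹' {p : ℝ × (Fin 2 → ℝ) |
      (p.1 ^ 2 + (p.2 0 ^ 2 + p.2 1 ^ 2) ≤ r ^ 2) ∧ p.1 ∈ S})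
      = S.indicator (fun t => ENNReal.ofReal (π * (r ^ 2 - t ^ 2))) t := by
    intro t
    by_cases ht : t ∈ S
    · rw [Set.indicator_of_mem ht]
      rw [show Prod.mk t ⁻¹' {p : ℝ × (Fin 2 → ℝ) |
          (p.1 ^ 2 + (p.2 0 ^ 2 + p.2 1 ^ 2) ≤ r ^ 2) ∧ p.1 ∈ S}
          = {y : Fin 2 → ℝ | y 0 ^ 2 + y 1 ^ 2 ≤ r ^ 2 - t ^ 2} by
        ext y; simp only [Set.mem_preimage, Set.mem_setOf_eq, ht, and_true]; constructor <;>
          (intro h; linarith)]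
      exact disk_vol _
    · rw [Set.indicator_of_notMem ht]
      rw [show Prod.mk t ⁻¹' {p : ℝ × (Fin 2 → ℝ) |
          (p.1 ^ 2 + (p.2 0 ^ 2 + p.2 1 ^ 2) ≤ r ^ 2) ∧ p.1 ∈ S} = ∅ by
        ext y; simp [ht]]
      simp
  simp_rw [hslice]
  rw [lintegral_indicator hS]

lemma lint_Ioc (r a b : ℝ) (hab : a ≤ b) (hnn : ∀ t ∈ Set.Ioc a b, t ^ 2 ≤ r ^ 2) :
    ∫⁻ t in Set.Ioc a b, ENNReal.ofReal (π * (r ^ 2 - t ^ 2))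
      = ENNReal.ofReal (π * (r ^ 2 * (b - a) - (b ^ 3 - a ^ 3) / 3)) := by
  rw [← ofReal_integral_eq_lintegral_ofReal]
  · congr 1
    rw [← intervalIntegral.integral_of_le hab]
    rw [intervalIntegral.integral_const_mul]
    rw [intervalIntegral.integral_sub intervalIntegrable_const
      (intervalIntegral.intervalIntegrable_pow 2)]
    rw [intervalIntegral.integral_const, integral_pow]
    push_cast [smul_eq_mul]
    ring
  · apply (continuous_const.mul
      (continuous_const.sub (continuous_pow 2))).integrableOn_Icc.mono_set
    exact Set.Ioc_subset_Icc_self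
  · rw [Filter.EventuallyLE, ae_restrict_iff' measurableSet_Ioc]
    filter_upwards with t ht
    show (0:ℝ) ≤ π * (r ^ 2 - t ^ 2)
    exact mul_nonneg Real.pi_nonneg (by have := hnn t ht; linarith)

lemma lint_univ (r : ℝ) (hr : 0 ≤ r) :
    ∫⁻ t, ENNReal.ofReal (π * (r ^ 2 - t ^ 2))
      = ENNReal.ofReal (π * (4 / 3 * r ^ 3)) := by
  have h1 : ∀ t : ℝ, ENNReal.ofReal (π * (r ^ 2 - t ^ 2))
      = (Set.Ioc (-r) r).indicator (fun t => ENNReal.ofReal (π * (r ^ 2 - t ^ 2))) t := by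
    intro t
    by_cases ht : t ∈ Set.Ioc (-r) r
    · rw [Set.indicator_of_mem ht]
    · rw [Set.indicator_of_notMem ht, ENNReal.ofReal_eq_zero]
      simp only [Set.mem_Ioc, not_and_or, not_lt, not_le] at ht
      apply mul_nonpos_of_nonneg_of_nonpos Real.pi_nonneg
      rcases ht with ht | ht
      · nlinarith
      · nlinarith
  rw [lintegral_congr h1]
  rw [lintegral_indicator measurableSet_Ioc]
  rw [lint_Ioc r (-r) r (by linarith) (fun t ht => by
    rcases ht with ⟨h1', h2'⟩; nlinarith)]
  congr 1; ring

lemma lint_tail (r c : ℝ) (hc : 0 < c) (hcr : c ≤ r) :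
    ∫⁻ t in Set.Ioi c, ENNReal.ofReal (π * (r ^ 2 - t ^ 2))
      = ENNReal.ofReal (π * (r ^ 2 * (r - c) - (r ^ 3 - c ^ 3) / 3)) := by
  have h1 : ∀ t ∈ Set.Ioi c, ENNReal.ofReal (π * (r ^ 2 - t ^ 2))
      = (Set.Ioc c r).indicator (fun t => ENNReal.ofReal (π * (r ^ 2 - t ^ 2))) t := by
    intro t ht
    simp only [Set.mem_Ioi] at ht
    by_cases ht' : t ∈ Set.Ioc c r
    · rw [Set.indicator_of_mem ht']
    · rw [Set.indicator_of_notMem ht', ENNReal.ofReal_eq_zero]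
      simp only [Set.mem_Ioc, not_and_or, not_lt, not_le] at ht'
      apply mul_nonpos_of_nonneg_of_nonpos Real.pi_nonneg
      rcases ht' with ht' | ht'
      · linarith
      · nlinarith
  rw [setLIntegral_congr_fun_ae measurableSet_Ioi (ae_of_all _ h1)]
  rw [lintegral_indicator measurableSet_Ioc, Measure.restrict_restrict measurableSet_Ioc,
    Set.inter_eq_left.mpr (fun t ht => ht.1)]
  exact lint_Ioc r c r hcr (fun t ht => by rcases ht with ⟨h1', h2'⟩; nlinarith)

lemma lint_tail_neg (r c : ℝ) (hc : 0 < c) (hcr : c ≤ r) :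
    ∫⁻ t in Set.Iio (-c), ENNReal.ofReal (π * (r ^ 2 - t ^ 2))
      = ENNReal.ofReal (π * (r ^ 2 * (r - c) - (r ^ 3 - c ^ 3) / 3)) := by
  have h1 : ∀ t ∈ Set.Iio (-c), ENNReal.ofReal (π * (r ^ 2 - t ^ 2))
      = (Set.Ico (-r) (-c)).indicator (fun t => ENNReal.ofReal (π * (r ^ 2 - t ^ 2))) t := by
    intro t ht
    simp only [Set.mem_Iio] at ht
    by_cases ht' : t ∈ Set.Ico (-r) (-c)
    · rw [Set.indicator_of_mem ht']
    · rw [Set.indicator_of_notMem ht', ENNReal.ofReal_eq_zero]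
      simp only [Set.mem_Ico, not_and_or, not_lt, not_le] at ht'
      apply mul_nonpos_of_nonneg_of_nonpos Real.pi_nonneg
      rcases ht' with ht' | ht'
      · nlinarith
      · linarith
  rw [setLIntegral_congr_fun_ae measurableSet_Iio (ae_of_all _ h1)]
  rw [lintegral_indicator measurableSet_Ico, Measure.restrict_restrict measurableSet_Ico,
    Set.inter_eq_left.mpr (fun t ht => ht.2)]
  rw [Measure.restrict_congr_set Ico_ae_eq_Ioc]
  rw [lint_Ioc r (-r) (-c) (by linarith) (fun t ht => by rcases ht with ⟨h1', h2'⟩; nlinarith)]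
  congr 1; ring

lemma vol_transfer (r : ℝ) (i : Fin 3) (S : Set ℝ) (hS : MeasurableSet S) :
    volume {x : EuclideanSpace ℝ (Fin 3) | (∑ j, x j ^ 2) ≤ r ^ 2 ∧ x i ∈ S}
      = ∫⁻ t in S, ENNReal.ofReal (π * (r ^ 2 - t ^ 2)) := by
  have hA : MeasurableSet {x : Fin 3 → ℝ | (∑ j, x j ^ 2) ≤ r ^ 2 ∧ x i ∈ S} := by
    apply MeasurableSet.inter
    · exact measurableSet_le (Finset.univ.measurable_sum
        (fun j _ => (measurable_pi_apply j).pow_const 2)) measurable_const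
    · exact (measurable_pi_apply i) hS
  rw [← slab_vol r i S hS]
  rw [← (EuclideanSpace.volume_preserving_symm_measurableEquiv_toLp (Fin 3)).measure_preimage
    hA.nullMeasurableSet]
  rfl

lemma coord_sq_le (y : ℝ) (m : ℤ) (h1 : -1 ≤ y) (h2 : y < 1) :
    y ^ 2 ≤ (y + 2 * (m : ℝ)) ^ 2 := by
  rcases lt_trichotomy m 0 with hm | hm | hm
  · have hm' : m ≤ -1 := by omega
    have : (m : ℝ) ≤ -1 := by exact_mod_cast hm'
    nlinarith
  · simp [hm]
  · have : (1 : ℝ) ≤ m := by exact_mod_cast hm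
    nlinarith

lemma mem_cell_iff (x : ℝ) (m : ℤ) :
    (2 * (m : ℝ) - 1 ≤ x ∧ x < 2 * (m : ℝ) + 1) ↔ m = ⌊(x + 1) / 2⌋ := by
  constructor
  · rintro ⟨h1, h2⟩
    refine ((Int.floor_eq_iff (R := ℝ)).mpr ⟨by linarith, by push_cast; linarith⟩).symm
  · intro h
    have h1 := Int.floor_le ((x + 1) / 2)
    have h2 := Int.lt_floor_add_one ((x + 1) / 2)
    rw [← h] at h1 h2
    push_cast at h1 h2
    constructor <;> linarith

/-- Explicit isodiametric inequality for the integer lattice `ℤ³` in the range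
`2 ≤ D ≤ 2√2`: every centrally symmetric convex body with no nonzero integer point
in its interior and diameter `D` satisfies `vol K ≤ 2π(-D³/6 + 3D²/4 - 1)`. -/
theorem isodiametric_Z3_middle_range
    (K : Set (EuclideanSpace ℝ (Fin 3)))
    (hKcpt : IsCompact K) (hKconv : Convex ℝ K) (hKsymm : K = -K)
    (hKadm : ∀ z : Fin 3 → ℤ,
      (fun i => (z i : ℝ)) ≠ (0 : EuclideanSpace ℝ (Fin 3)) →
      WithLp.toLp 2 (fun i => (z i : ℝ)) ∉ interior K)
    (D : ℝ) (hD : D = diam K)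
    (hD1 : 2 ≤ D) (hD2 : D ≤ 2 * Real.sqrt 2) :
    volume K ≤ ENNReal.ofReal (2 * π * (-(D ^ 3) / 6 + 3 * D ^ 2 / 4 - 1)) := by
  set r : ℝ := D / 2 with hrdef
  have hr1 : 1 ≤ r := by rw [hrdef]; linarith
  have hr0 : (0:ℝ) ≤ r := by linarith
  have hr2 : r ^ 2 ≤ 2 := by
    have h8 : D ^ 2 ≤ 8 := by
      have hs : (2 * Real.sqrt 2) ^ 2 = 8 := by
        rw [mul_pow, Real.sq_sqrt (by norm_num : (0:ℝ) ≤ 2)]; norm_num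
      nlinarith [Real.sqrt_nonneg 2]
    rw [hrdef]; nlinarith
  set U : Set (EuclideanSpace ℝ (Fin 3)) := interior K with hUdef
  have hUopen : IsOpen U := isOpen_interior
  have hUK : U ⊆ K := interior_subset
  have hUconv : Convex ℝ U := hKconv.interior
  have hUsymm : ∀ x, x ∈ U → -x ∈ U := by
    intro x hx
    have hsub : -U ⊆ U := by
      apply interior_maximal
      · intro y hy
        rw [Set.mem_neg] at hy
        rw [hKsymm, Set.mem_neg]
        exact hUK hy
      · exact hUopen.neg
    exact hsub (by rwa [Set.mem_neg, neg_neg])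
  have hKB : ∀ x ∈ K, (∑ j, x j ^ 2) ≤ r ^ 2 := by
    intro x hx
    have hnx : -x ∈ K := by rw [hKsymm, Set.mem_neg, neg_neg]; exact hx
    have hdist : dist x (-x) ≤ D := by
      rw [hD]; exact dist_le_diam_of_mem hKcpt.isBounded hx hnx
    have h2x : dist x (-x) = 2 * ‖x‖ := by
      rw [dist_eq_norm, sub_neg_eq_add, ← two_smul ℝ x, norm_smul]
      simp
    have hnorm : ‖x‖ ≤ r := by rw [hrdef]; linarith [h2x ▸ hdist]
    have hsum : (∑ j, x j ^ 2) = ‖x‖ ^ 2 := by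
      rw [EuclideanSpace.norm_eq, Real.sq_sqrt (by positivity)]
      congr 1; ext j; rw [Real.norm_eq_abs, sq_abs]
    rw [hsum]
    exact pow_le_pow_left₀ (norm_nonneg x) hnorm 2

  classical
  -- the ball set
  set B : Set (EuclideanSpace ℝ (Fin 3)) := {x | (∑ j, x j ^ 2) ≤ r ^ 2} with hBdef
  have hBmeas : MeasurableSet B :=
    measurableSet_le (Finset.univ.measurable_sum
      (fun j _ => ((measurable_pi_apply j).comp (WithLp.measurable_ofLp 2 _)).pow_const 2)) measurable_const
  have hvolB : volume B = ENNReal.ofReal (π * (4 / 3 * r ^ 3)) := by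
    have hBeq : B = {x : EuclideanSpace ℝ (Fin 3) |
        (∑ j, x j ^ 2) ≤ r ^ 2 ∧ x 0 ∈ (Set.univ : Set ℝ)} := by
      ext x; simp [hBdef]
    rw [hBeq, vol_transfer r 0 Set.univ MeasurableSet.univ, Measure.restrict_univ,
      lint_univ r hr0]
  -- the caps
  set capval : ℝ := π * (r ^ 2 * (r - 1) - (r ^ 3 - 1) / 3) with hcapdef
  have hcapnn : 0 ≤ capval := by
    rw [hcapdef]
    apply mul_nonneg Real.pi_nonneg
    nlinarith [mul_nonneg (sq_nonneg (r - 1)) (by linarith : (0:ℝ) ≤ 2 * r + 1)]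
  set Cap : Fin 3 × Bool → Set (EuclideanSpace ℝ (Fin 3)) := fun p =>
    {x | (∑ j, x j ^ 2) ≤ r ^ 2 ∧ x p.1 ∈ (bif p.2 then Set.Ioi (1:ℝ) else Set.Iio (-1:ℝ))}
    with hCapdef
  have hCapMeas : ∀ p, MeasurableSet (Cap p) := by
    rintro ⟨i, b⟩
    apply MeasurableSet.inter
    · exact measurableSet_le (Finset.univ.measurable_sum
        (fun j _ => ((measurable_pi_apply j).comp (WithLp.measurable_ofLp 2 _)).pow_const 2)) measurable_const
    · apply ((measurable_pi_apply i).comp (WithLp.measurable_ofLp 2 _))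
      cases b
      · exact measurableSet_Iio
      · exact measurableSet_Ioi
  have hvolCap : ∀ p, volume (Cap p) = ENNReal.ofReal capval := by
    rintro ⟨i, b⟩
    cases b
    · show volume {x : EuclideanSpace ℝ (Fin 3) |
        (∑ j, x j ^ 2) ≤ r ^ 2 ∧ x i ∈ Set.Iio (-1 : ℝ)} = _
      rw [vol_transfer r i _ measurableSet_Iio]
      rw [show Set.Iio (-1 : ℝ) = Set.Iio (-(1:ℝ)) by norm_num]
      rw [lint_tail_neg r 1 one_pos hr1, hcapdef]
      norm_num
    · show volume {x : EuclideanSpace ℝ (Fin 3) |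
        (∑ j, x j ^ 2) ≤ r ^ 2 ∧ x i ∈ Set.Ioi (1 : ℝ)} = _
      rw [vol_transfer r i _ measurableSet_Ioi, lint_tail r 1 one_pos hr1, hcapdef]
      norm_num
  have hCapB : ∀ p, Cap p ⊆ B := by
    rintro ⟨i, b⟩ x hx
    exact hx.1
  -- the translated pieces
  set c : (Fin 3 → ℤ) → EuclideanSpace ℝ (Fin 3) :=
    fun v => WithLp.toLp 2 (fun i => 2 * (v i : ℝ)) with hcdef
  have hcapp : ∀ v i, (c v) i = 2 * (v i : ℝ) := fun v i => rfl
  set P : (Fin 3 → ℤ) → Set (EuclideanSpace ℝ (Fin 3)) := fun v =>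
    {y | (c v + y) ∈ U ∧ ∀ i, -1 ≤ y i ∧ y i < 1} with hPdef
  have hPmeas : ∀ v, MeasurableSet (P v) := by
    intro v
    have h1 : P v = ((fun y => c v + y) ⁻¹' U) ∩ (⋂ i, {y | y i ∈ Set.Ico (-1:ℝ) 1}) := by
      ext y
      simp only [hPdef, Set.mem_setOf_eq, Set.mem_inter_iff, Set.mem_preimage,
        Set.mem_iInter, Set.mem_Ico]
    rw [h1]
    exact ((measurable_const_add (c v)) hUopen.measurableSet).inter
      (MeasurableSet.iInter fun i => ((measurable_pi_apply i).comp (WithLp.measurable_ofLp 2 _)) measurableSet_Ico)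
  set cell : (Fin 3 → ℤ) → Set (EuclideanSpace ℝ (Fin 3)) := fun v =>
    {x | ∀ i, 2 * (v i : ℝ) - 1 ≤ x i ∧ x i < 2 * (v i : ℝ) + 1} with hcelldef
  have hcellmeas : ∀ v, MeasurableSet (cell v) := by
    intro v
    have h1 : cell v = ⋂ i, {x : EuclideanSpace ℝ (Fin 3) |
        x i ∈ Set.Ico (2 * (v i : ℝ) - 1) (2 * (v i : ℝ) + 1)} := by
      ext x
      simp only [hcelldef, Set.mem_setOf_eq, Set.mem_iInter, Set.mem_Ico]
    rw [h1]
    exact MeasurableSet.iInter fun i => ((measurable_pi_apply i).comp (WithLp.measurable_ofLp 2 _)) measurableSet_Ico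
  have hPvol : ∀ v, volume (P v) = volume (U ∩ cell v) := by
    intro v
    have h1 : P v = (fun y => c v + y) ⁻¹' (U ∩ cell v) := by
      ext y
      simp only [hPdef, hcelldef, Set.mem_preimage, Set.mem_inter_iff, Set.mem_setOf_eq]
      constructor
      · rintro ⟨hU1, h2⟩
        refine ⟨hU1, fun i => ?_⟩
        have happ : (c v + y) i = 2 * (v i : ℝ) + y i := rfl
        rw [happ]
        constructor <;> linarith [(h2 i).1, (h2 i).2]
      · rintro ⟨hU1, h2⟩
        refine ⟨hU1, fun i => ?_⟩
        have h2i := h2 i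
        have happ : (c v + y) i = 2 * (v i : ℝ) + y i := rfl
        rw [happ] at h2i
        constructor <;> linarith [h2i.1, h2i.2]
    rw [h1, measure_preimage_add]
  -- U is covered by the cells
  have hcover : U = ⋃ v, U ∩ cell v := by
    ext x
    simp only [Set.mem_iUnion, Set.mem_inter_iff]
    constructor
    · intro hx
      refine ⟨fun i => ⌊(x i + 1) / 2⌋, hx, fun i => ?_⟩
      exact (mem_cell_iff (x i) _).mpr rfl
    · rintro ⟨v, hx, -⟩; exact hx
  have hcelldisj : Pairwise (Function.onFun Disjoint (fun v => U ∩ cell v)) := by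
    intro v w hvw
    refine Set.disjoint_left.mpr ?_
    rintro x ⟨-, hxv⟩ ⟨-, hxw⟩
    apply hvw
    funext i
    have h1 := (mem_cell_iff (x i) (v i)).mp (hxv i)
    have h2 := (mem_cell_iff (x i) (w i)).mp (hxw i)
    rw [h1, h2]
  have hUvol : volume U = ∑' v : Fin 3 → ℤ, volume (P v) := by
    calc volume U = volume (⋃ v, U ∩ cell v) := by rw [← hcover]
    _ = ∑' v, volume (U ∩ cell v) :=
      measure_iUnion hcelldisj (fun v => hUopen.measurableSet.inter (hcellmeas v))
    _ = ∑' v, volume (P v) := by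
      apply tsum_congr; intro v; rw [hPvol]
  -- the pieces are pairwise disjoint
  have hPdisj : Pairwise (Function.onFun Disjoint P) := by
    intro v w hvw
    refine Set.disjoint_left.mpr ?_
    rintro y ⟨hyv, -⟩ ⟨hyw, -⟩
    have hneg : -(c w + y) ∈ U := hUsymm _ hyw
    have hmid : (1/2 : ℝ) • (c v + y) + (1/2 : ℝ) • (-(c w + y)) ∈ U :=
      hUconv hyv hneg (by norm_num) (by norm_num) (by norm_num)
    have heq : (1/2 : ℝ) • (c v + y) + (1/2 : ℝ) • (-(c w + y))
        = WithLp.toLp 2 (fun i => ((v i - w i : ℤ) : ℝ)) := by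
      ext i
      show (1/2 : ℝ) * (2 * (v i : ℝ) + y i) + (1/2 : ℝ) * (-(2 * (w i : ℝ) + y i))
        = ((v i - w i : ℤ) : ℝ)
      push_cast
      ring
    rw [heq] at hmid
    refine hKadm (fun i => v i - w i) ?_ hmid
    intro h0
    apply hvw
    funext i
    have h1 : ((v i - w i : ℤ) : ℝ) = 0 := congrFun h0 i
    have h2 : v i - w i = 0 := by exact_mod_cast h1
    omega
  -- the pieces are inside the ball
  have hPB : ∀ v, P v ⊆ B := by
    intro v y hy
    obtain ⟨hyU, hybox⟩ := hy
    have hk : (∑ j, ((c v + y) j) ^ 2) ≤ r ^ 2 := hKB _ (hUK hyU)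
    have hmono : (∑ j, y j ^ 2) ≤ ∑ j, ((c v + y) j) ^ 2 := by
      apply Finset.sum_le_sum
      intro j _
      have happ : (c v + y) j = y j + 2 * (v j : ℝ) := by
        show 2 * (v j : ℝ) + y j = _
        ring
      rw [happ]
      exact coord_sq_le (y j) (v j) (hybox j).1 (hybox j).2
    exact le_trans hmono hk
  -- pieces are disjoint from caps
  have hPCap : ∀ v p, Disjoint (P v) (Cap p) := by
    rintro v ⟨i, b⟩
    refine Set.disjoint_left.mpr ?_
    rintro y ⟨-, hybox⟩ ⟨-, hyi⟩
    cases b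
    · simp only [Bool.cond_false, Set.mem_Iio] at hyi
      linarith [(hybox i).1]
    · simp only [Bool.cond_true, Set.mem_Ioi] at hyi
      linarith [(hybox i).2]
  -- caps are pairwise disjoint
  have hCapCap : Pairwise (Function.onFun Disjoint Cap) := by
    rintro ⟨i, b⟩ ⟨j, d⟩ hne
    refine Set.disjoint_left.mpr ?_
    rintro x ⟨hxB, hxi⟩ ⟨-, hxj⟩
    by_cases hij : i = j
    · subst hij
      have hbd : b ≠ d := by
        intro h; exact hne (by rw [h])
      cases b <;> cases d
      · exact hbd rfl
      · simp only [Bool.cond_false, Set.mem_Iio] at hxi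
        simp only [Bool.cond_true, Set.mem_Ioi] at hxj
        linarith
      · simp only [Bool.cond_true, Set.mem_Ioi] at hxi
        simp only [Bool.cond_false, Set.mem_Iio] at hxj
        linarith
      · exact hbd rfl
    · have hsum2 : (x i) ^ 2 + (x j) ^ 2 ≤ ∑ k, x k ^ 2 := by
        have hsub := Finset.sum_le_sum_of_subset_of_nonneg
          (Finset.subset_univ ({i, j} : Finset (Fin 3)))
          (fun k _ _ => sq_nonneg (x k))
        rwa [Finset.sum_pair hij] at hsub
      have hxi2 : 1 < (x i) ^ 2 := by
        cases b
        · simp only [Bool.cond_false, Set.mem_Iio] at hxi; nlinarith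
        · simp only [Bool.cond_true, Set.mem_Ioi] at hxi; nlinarith
      have hxj2 : 1 < (x j) ^ 2 := by
        cases d
        · simp only [Bool.cond_false, Set.mem_Iio] at hxj; nlinarith
        · simp only [Bool.cond_true, Set.mem_Ioi] at hxj; nlinarith
      nlinarith
  -- putting it together
  have hvolA : volume (⋃ v, P v) = volume U := by
    rw [measure_iUnion hPdisj hPmeas, ← hUvol]
  have hvolC : volume (⋃ p, Cap p) = 6 * ENNReal.ofReal capval := by
    rw [measure_iUnion hCapCap hCapMeas, tsum_congr hvolCap, tsum_fintype,
      Finset.sum_const]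
    simp only [Finset.card_univ]
    rw [show Fintype.card (Fin 3 × Bool) = 6 from rfl, nsmul_eq_mul]
    norm_num
  have hdisjAC : Disjoint (⋃ v, P v) (⋃ p, Cap p) := by
    apply Set.disjoint_iUnion_left.mpr
    intro v
    apply Set.disjoint_iUnion_right.mpr
    intro p
    exact hPCap v p
  have hfinal1 : volume U + 6 * ENNReal.ofReal capval ≤ volume B := by
    rw [← hvolA, ← hvolC, ← measure_union hdisjAC (MeasurableSet.iUnion hCapMeas)]
    exact measure_mono (Set.union_subset (Set.iUnion_subset fun v => hPB v)
      (Set.iUnion_subset fun p => hCapB p))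
  have hKU : volume K ≤ volume U := by
    have h1 : K ⊆ U ∪ frontier K := by
      intro x hx
      have hx2 : x ∈ closure K := subset_closure hx
      rw [closure_eq_interior_union_frontier] at hx2
      exact hx2
    calc volume K ≤ volume (U ∪ frontier K) := measure_mono h1
    _ ≤ volume U + volume (frontier K) := measure_union_le _ _
    _ = volume U := by rw [hKconv.addHaar_frontier volume, add_zero]
  have hfinal2 : volume K + 6 * ENNReal.ofReal capval ≤
      ENNReal.ofReal (π * (4 / 3 * r ^ 3)) := by
    rw [← hvolB]
    exact le_trans (add_le_add_left hKU _) hfinal1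
  have hfinal3 : volume K ≤ ENNReal.ofReal (π * (4 / 3 * r ^ 3)) - 6 * ENNReal.ofReal capval :=
    ENNReal.le_sub_of_add_le_right (by finiteness) hfinal2
  have h6 : (6 : ENNReal) * ENNReal.ofReal capval = ENNReal.ofReal (6 * capval) := by
    rw [ENNReal.ofReal_mul (by norm_num : (0:ℝ) ≤ 6)]
    norm_num
  rw [h6] at hfinal3
  rw [← ENNReal.ofReal_sub _ (by linarith : (0:ℝ) ≤ 6 * capval)] at hfinal3
  refine le_trans hfinal3 (le_of_eq ?_)
  congr 1
  rw [hcapdef, hrdef]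
  ring
end

section
/- Let K ⊆ ℝ³ be a compact convex set with K = −K containing no nonzero integer point in its interior, and set D = diam K. If 2√2 < D ≤ 2√3, then vol K ≤ 4√(D² − 8) + (3D² − 4)·arctan((12 − D²)/(4√(D² − 8))) − (2/3)·D³·arctan(D(12 − D²)/((D² + 4)√(D² − 8))). -/
set_option maxHeartbeats 1000000

open MeasureTheory Metric Real

namespace IsodiametricZ3Aux

open intervalIntegral

lemma hasDerivAt_G (t : ℝ) (y : ℝ) (hy : y^2 < t) :
    HasDerivAt (fun u : ℝ => u * Real.sqrt (t - u^2) + t * Real.arctan (u / Real.sqrt (t - u^2)))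
      (2 * Real.sqrt (t - y^2)) y := by
  have hpos : 0 < t - y^2 := by linarith
  have ht : 0 < t := lt_of_le_of_lt (sq_nonneg y) hy
  set w := Real.sqrt (t - y^2) with hwdef
  have hw : 0 < w := Real.sqrt_pos.mpr hpos
  have hw2 : w^2 = t - y^2 := Real.sq_sqrt hpos.le
  have hin : HasDerivAt (fun u : ℝ => t - u^2) (-(2*y)) y := by
    simpa using ((hasDerivAt_pow 2 y).const_sub t)
  have hsqrt : HasDerivAt (fun u : ℝ => Real.sqrt (t - u^2)) (-(2*y) / (2*w)) y :=
    hin.sqrt (by simpa [hwdef] using hpos.ne')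
  have hmul : HasDerivAt (fun u : ℝ => u * Real.sqrt (t - u^2))
      (1 * w + y * (-(2*y) / (2*w))) y := (hasDerivAt_id y).mul hsqrt
  have hdiv : HasDerivAt (fun u : ℝ => u / Real.sqrt (t - u^2))
      ((1 * w - y * (-(2*y) / (2*w))) / w^2) y := (hasDerivAt_id y).div hsqrt hw.ne'
  have harct : HasDerivAt (fun u : ℝ => Real.arctan (u / Real.sqrt (t - u^2)))
      (1 / (1 + (y/w)^2) * ((1 * w - y * (-(2*y) / (2*w))) / w^2)) y := hdiv.arctan
  have := hmul.add (harct.const_mul t)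
  refine this.congr_deriv (Eq.symm ?_)
  have h1 : 1 + (y/w)^2 = t / w^2 := by field_simp; linarith [hw2]
  rw [h1]
  field_simp
  ring_nf

lemma cont_min (t : ℝ) : Continuous (fun y : ℝ => 2 * min 1 (Real.sqrt (t - y^2))) := by
  fun_prop

lemma inner_eval_high {t : ℝ} (ht : 2 ≤ t) :
    ∫ y in (-1:ℝ)..1, 2 * min 1 (Real.sqrt (t - y^2)) = 4 := by
  have : ∀ y ∈ Set.uIcc (-1:ℝ) 1, 2 * min 1 (Real.sqrt (t - y^2)) = 2 := by
    intro y hy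
    rw [Set.uIcc_of_le (by norm_num : (-1:ℝ) ≤ 1)] at hy
    have hy2 : y^2 ≤ 1 := by
      rw [sq_le_one_iff_abs_le_one, abs_le]; exact ⟨hy.1, hy.2⟩
    have : (1:ℝ) ≤ Real.sqrt (t - y^2) := by
      rw [show (1:ℝ) = Real.sqrt 1 by simp]
      exact Real.sqrt_le_sqrt (by linarith)
    rw [min_eq_left this]; norm_num
  rw [intervalIntegral.integral_congr this]
  simp; norm_num

lemma inner_eval_low {t : ℝ} (ht1 : 1 < t) (ht2 : t ≤ 2) :
    ∫ y in (-1:ℝ)..1, 2 * min 1 (Real.sqrt (t - y^2))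
      = 4 * Real.sqrt (t-1) + 2*t*(π/2 - 2*Real.arctan (Real.sqrt (t-1))) := by
  set a := Real.sqrt (t-1) with hadef
  have ha0 : 0 < a := Real.sqrt_pos.mpr (by linarith)
  have ha2 : a^2 = t - 1 := Real.sq_sqrt (by linarith)
  have ha1 : a ≤ 1 := by nlinarith [ha2, ha0]
  have hcont := cont_min t
  have hint : ∀ u v : ℝ, IntervalIntegrable (fun y : ℝ => 2 * min 1 (Real.sqrt (t - y^2))) volume u v :=
    fun u v => (hcont.intervalIntegrable u v)
  -- split
  rw [← intervalIntegral.integral_add_adjacent_intervals (a := (-1:ℝ)) (b := -a) (c := 1)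
        (hint _ _) (hint _ _),
      ← intervalIntegral.integral_add_adjacent_intervals (a := (-a:ℝ)) (b := a) (c := 1)
        (hint _ _) (hint _ _)]
  -- middle
  have hmid : ∫ y in (-a)..a, 2 * min 1 (Real.sqrt (t - y^2)) = 4 * a := by
    have : ∀ y ∈ Set.uIcc (-a) a, 2 * min 1 (Real.sqrt (t - y^2)) = 2 := by
      intro y hy
      rw [Set.uIcc_of_le (by linarith : -a ≤ a)] at hy
      have hy2 : y^2 ≤ a^2 := sq_le_sq' hy.1 hy.2
      have : (1:ℝ) ≤ Real.sqrt (t - y^2) := by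
        rw [show (1:ℝ) = Real.sqrt 1 by simp]
        exact Real.sqrt_le_sqrt (by nlinarith)
      rw [min_eq_left this]; norm_num
    rw [intervalIntegral.integral_congr this]
    simp; ring
  -- right piece
  have hright : ∫ y in a..1, 2 * min 1 (Real.sqrt (t - y^2)) = t*(π/2 - 2*Real.arctan a) := by
    have hcg : ∀ y ∈ Set.uIcc a 1, 2 * min 1 (Real.sqrt (t - y^2)) = 2 * Real.sqrt (t - y^2) := by
      intro y hy
      rw [Set.uIcc_of_le ha1] at hy
      have : Real.sqrt (t - y^2) ≤ 1 := Real.sqrt_le_one.mpr (by nlinarith [hy.1, hy.2, ha2])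
      rw [min_eq_right this]
    rw [intervalIntegral.integral_congr hcg]
    rw [intervalIntegral.integral_eq_sub_of_hasDerivAt
      (f := fun u : ℝ => u * Real.sqrt (t - u^2) + t * Real.arctan (u / Real.sqrt (t - u^2)))
      (fun y hy => by
        rw [Set.uIcc_of_le ha1] at hy
        exact hasDerivAt_G t y (by nlinarith [hy.1, hy.2]))
      ((by fun_prop : Continuous fun u : ℝ => 2 * Real.sqrt (t - u^2)).intervalIntegrable a 1)]
    have e1 : Real.sqrt (t - 1^2) = a := by rw [hadef]; norm_num
    have e2 : t - a^2 = 1 := by linarith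
    rw [e1, e2, Real.sqrt_one]
    rw [show a / 1 = a by ring, show (1:ℝ)/a = a⁻¹ by ring, Real.arctan_inv_of_pos ha0]
    ring
  -- left piece
  have hleft : ∫ y in (-1:ℝ)..(-a), 2 * min 1 (Real.sqrt (t - y^2)) = t*(π/2 - 2*Real.arctan a) := by
    have hcg : ∀ y ∈ Set.uIcc (-1:ℝ) (-a), 2 * min 1 (Real.sqrt (t - y^2)) = 2 * Real.sqrt (t - y^2) := by
      intro y hy
      rw [Set.uIcc_of_le (by linarith : (-1:ℝ) ≤ -a)] at hy
      have : Real.sqrt (t - y^2) ≤ 1 := Real.sqrt_le_one.mpr (by nlinarith [hy.1, hy.2, ha2])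
      rw [min_eq_right this]
    rw [intervalIntegral.integral_congr hcg]
    rw [intervalIntegral.integral_eq_sub_of_hasDerivAt
      (f := fun u : ℝ => u * Real.sqrt (t - u^2) + t * Real.arctan (u / Real.sqrt (t - u^2)))
      (fun y hy => by
        rw [Set.uIcc_of_le (by linarith : (-1:ℝ) ≤ -a)] at hy
        exact hasDerivAt_G t y (by nlinarith [hy.1, hy.2]))
      ((by fun_prop : Continuous fun u : ℝ => 2 * Real.sqrt (t - u^2)).intervalIntegrable _ _)]
    have e1 : Real.sqrt (t - (-1)^2) = a := by rw [hadef]; norm_num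
    have e2 : t - (-a)^2 = 1 := by nlinarith
    rw [e1, e2, Real.sqrt_one]
    rw [show -a / 1 = -a by ring, show (-1:ℝ)/a = -a⁻¹ by ring, Real.arctan_neg, Real.arctan_neg,
      Real.arctan_inv_of_pos ha0]
    ring
  rw [hmid, hright, hleft]; ring

lemma hasDerivAt_H (r : ℝ) (hr : 1 < r) (x : ℝ) (hx : x^2 < r^2 - 1) :
    HasDerivAt (fun u : ℝ =>
        (8/3)*u*Real.sqrt (r^2-1-u^2)
        + (4*(r^2-1)+8/3)*Real.arctan (u / Real.sqrt (r^2-1-u^2))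
        + (r^2*u - u^3/3)*(π - 4*Real.arctan (Real.sqrt (r^2-1-u^2)))
        - (8/3)*r^3*Real.arctan (u / (r * Real.sqrt (r^2-1-u^2))))
      (4*Real.sqrt (r^2-1-x^2) + 2*(r^2-x^2)*(π/2 - 2*Real.arctan (Real.sqrt (r^2-1-x^2)))) x := by
  have hpos : 0 < r^2 - 1 - x^2 := by linarith
  have hr0 : 0 < r := by linarith
  set w := Real.sqrt (r^2-1-x^2) with hwdef
  have hw : 0 < w := Real.sqrt_pos.mpr hpos
  have hw2 : w^2 = r^2-1-x^2 := Real.sq_sqrt hpos.le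
  have hrx : 0 < r^2 - x^2 := by nlinarith
  have hc : 0 < r^2 - 1 := by nlinarith [sq_nonneg x]
  have hin : HasDerivAt (fun u : ℝ => r^2-1-u^2) (-(2*x)) x := by
    simpa using ((hasDerivAt_pow 2 x).const_sub (r^2-1))
  have hsqrt : HasDerivAt (fun u : ℝ => Real.sqrt (r^2-1-u^2)) (-x/w) x := by
    have := hin.sqrt (by simpa [hwdef] using hpos.ne')
    convert this using 1
    rw [← hwdef]; field_simp
  -- A : (8/3) * u * w u
  have hA : HasDerivAt (fun u : ℝ => (8/3)*u*Real.sqrt (r^2-1-u^2))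
      ((8/3)*((r^2-1-2*x^2)/w)) x := by
    have h0 := ((hasDerivAt_id x).mul hsqrt).const_mul (8/3 : ℝ)
    have h1 : HasDerivAt (fun u : ℝ => (8/3)*u*Real.sqrt (r^2-1-u^2))
        ((8/3)*(1*w + x*(-x/w))) x := by
      simpa only [← mul_assoc, Pi.mul_apply, id_eq] using h0
    have h2 : (8/3:ℝ)*(1*w + x*(-x/w)) = (8/3)*((r^2-1-2*x^2)/w) := by
      rw [mul_eq_mul_left_iff]; left
      field_simp; linarith [hw2]
    rwa [h2] at h1
  -- B : arctan (u / w u)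
  have hdivB : HasDerivAt (fun u : ℝ => u / Real.sqrt (r^2-1-u^2))
      ((1*w - x*(-x/w))/w^2) x := (hasDerivAt_id x).div hsqrt hw.ne'
  have hB : HasDerivAt (fun u : ℝ => (4*(r^2-1)+8/3)*Real.arctan (u / Real.sqrt (r^2-1-u^2)))
      ((4*(r^2-1)+8/3)*(1/w)) x := by
    have h0 := hdivB.arctan.const_mul (4*(r^2-1)+8/3 : ℝ)
    have e1 : 1 + (x/w)^2 = (r^2-1)/w^2 := by field_simp; linarith [hw2]
    have e2 : 1*w - x*(-x/w) = (r^2-1)/w := by field_simp; linarith [hw2]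
    have h2 : (4*(r^2-1)+8/3 : ℝ) * (1 / (1 + (x/w)^2) * ((1*w - x*(-x/w))/w^2))
        = (4*(r^2-1)+8/3)*(1/w) := by
      rw [e1, e2, mul_eq_mul_left_iff]; left
      field_simp
    rwa [h2] at h0
  -- C : (r^2 u - u^3/3) * (π - 4 arctan (w u))
  have hp1 : HasDerivAt (fun u : ℝ => r^2*u - u^3/3) (r^2 - x^2) x := by
    have h1 : HasDerivAt (fun u : ℝ => r^2*u) (r^2) x := by
      simpa using (hasDerivAt_id x).const_mul (r^2)
    have h2 : HasDerivAt (fun u : ℝ => u^3/3) (x^2) x := by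
      have := (hasDerivAt_pow 3 x).div_const 3
      exact this.congr_deriv (by push_cast; ring)
    exact h1.sub h2
  have hp2 : HasDerivAt (fun u : ℝ => π - 4*Real.arctan (Real.sqrt (r^2-1-u^2)))
      (4*x/(w*(r^2-x^2))) x := by
    have h0 := (hsqrt.arctan.const_mul (4:ℝ)).const_sub π
    have e1 : 1 + w^2 = r^2 - x^2 := by linarith [hw2]
    have h2 : -(4 * (1 / (1 + w^2) * (-x/w))) = 4*x/(w*(r^2-x^2)) := by
      rw [e1]; field_simp
      try exact Or.inl (by ring)
    rwa [h2] at h0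
  have hC : HasDerivAt (fun u : ℝ => (r^2*u - u^3/3)*(π - 4*Real.arctan (Real.sqrt (r^2-1-u^2))))
      ((r^2 - x^2)*(π - 4*Real.arctan w) + (r^2*x - x^3/3)*(4*x/(w*(r^2-x^2)))) x := hp1.mul hp2
  -- D : (8/3) r^3 arctan (u / (r * w u))
  have hrw : (0:ℝ) < r * w := by positivity
  have hdenD : HasDerivAt (fun u : ℝ => r * Real.sqrt (r^2-1-u^2)) (r*(-x/w)) x :=
    hsqrt.const_mul r
  have hdivD : HasDerivAt (fun u : ℝ => u / (r * Real.sqrt (r^2-1-u^2)))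
      ((1*(r*w) - x*(r*(-x/w)))/(r*w)^2) x := (hasDerivAt_id x).div hdenD hrw.ne'
  have hD : HasDerivAt (fun u : ℝ => (8/3)*r^3*Real.arctan (u / (r * Real.sqrt (r^2-1-u^2))))
      ((8/3)*r^3*(r/(w*(r^2-x^2)))) x := by
    have h0 := hdivD.arctan.const_mul ((8/3)*r^3 : ℝ)
    have e1 : 1 + (x/(r*w))^2 = ((r^2-1)*(r^2-x^2))/(r*w)^2 := by
      field_simp; linear_combination r^2 * hw2
    have e2 : 1*(r*w) - x*(r*(-x/w)) = r*(r^2-1)/w := by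
      rw [show r^2 - 1 = w^2 + x^2 by linarith [hw2]]; field_simp; ring
    have h2 : ((8/3)*r^3 : ℝ) * (1 / (1 + (x/(r*w))^2) * ((1*(r*w) - x*(r*(-x/w)))/(r*w)^2))
        = (8/3)*r^3*(r/(w*(r^2-x^2))) := by
      rw [e1, e2, mul_eq_mul_left_iff]; left
      field_simp
    rwa [h2] at h0
  -- assemble
  have hsum := ((hA.add hB).add hC).sub hD
  refine hsum.congr_deriv (Eq.symm ?_)
  have h4w : 4*w = 4*(r^2-1-x^2)/w := by field_simp; linarith [hw2]
  rw [h4w]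
  field_simp
  ring

lemma integral_eval (r D : ℝ) (h2 : Real.sqrt 2 < r) (h3 : r ≤ Real.sqrt 3)
    (hDr : D = 2*r) :
    ∫ x in (-1:ℝ)..1, ∫ y in (-1:ℝ)..1, 2 * min 1 (Real.sqrt (r^2 - x^2 - y^2))
      = 4 * Real.sqrt (D ^ 2 - 8)
        + (3 * D ^ 2 - 4) * Real.arctan ((12 - D ^ 2) / (4 * Real.sqrt (D ^ 2 - 8)))
        - (2 / 3) * D ^ 3
            * Real.arctan (D * (12 - D ^ 2) / ((D ^ 2 + 4) * Real.sqrt (D ^ 2 - 8))) := by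
  have hs2 : (0:ℝ) ≤ 2 := by norm_num
  have hr0 : 0 < r := lt_of_le_of_lt (Real.sqrt_nonneg 2) h2
  have hr2 : 2 < r^2 := by nlinarith [Real.sq_sqrt hs2, Real.sqrt_nonneg 2]
  have hr3 : r^2 ≤ 3 := by nlinarith [Real.sq_sqrt (by norm_num : (0:ℝ) ≤ 3), Real.sqrt_nonneg 3, h3]
  have hr1 : 1 < r := by nlinarith
  set b := Real.sqrt (r^2-2) with hbdef
  have hb0 : 0 < b := Real.sqrt_pos.mpr (by linarith)
  have hb2 : b^2 = r^2-2 := Real.sq_sqrt (by linarith)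
  have hb1 : b ≤ 1 := by nlinarith [hb2, hb0]
  -- the inner integral as a function of x
  set inn : ℝ → ℝ := fun x => ∫ y in (-1:ℝ)..1, 2 * min 1 (Real.sqrt (r^2 - x^2 - y^2))
    with hinn
  have hcont : Continuous inn := by
    apply intervalIntegral.continuous_parametric_intervalIntegral_of_continuous'
    fun_prop
  have hint : ∀ u v : ℝ, IntervalIntegrable inn volume u v := fun u v =>
    hcont.intervalIntegrable u v
  -- split the outer integral
  have hsplit : ∫ x in (-1:ℝ)..1, inn x
      = (∫ x in (-1:ℝ)..(-b), inn x) + (∫ x in (-b:ℝ)..b, inn x) + (∫ x in (b:ℝ)..1, inn x) := by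
    rw [← intervalIntegral.integral_add_adjacent_intervals (hint (-1) (-b)) (hint (-b) 1),
      ← intervalIntegral.integral_add_adjacent_intervals (hint (-b) b) (hint b 1)]
    ring
  -- middle piece
  have hmid : ∫ x in (-b:ℝ)..b, inn x = 8*b := by
    have hcg : ∀ x ∈ Set.uIcc (-b) b, inn x = 4 := by
      intro x hx
      rw [Set.uIcc_of_le (by linarith : -b ≤ b)] at hx
      have hx2 : x^2 ≤ b^2 := sq_le_sq' hx.1 hx.2
      exact inner_eval_high (by nlinarith)
    rw [intervalIntegral.integral_congr hcg]
    simp; ring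
  -- right piece
  have hright : ∫ x in (b:ℝ)..1, inn x =
      ((8/3)*1*Real.sqrt (r^2-1-1^2)
        + (4*(r^2-1)+8/3)*Real.arctan (1 / Real.sqrt (r^2-1-1^2))
        + (r^2*1 - 1^3/3)*(π - 4*Real.arctan (Real.sqrt (r^2-1-1^2)))
        - (8/3)*r^3*Real.arctan (1 / (r * Real.sqrt (r^2-1-1^2))))
      - ((8/3)*b*Real.sqrt (r^2-1-b^2)
        + (4*(r^2-1)+8/3)*Real.arctan (b / Real.sqrt (r^2-1-b^2))
        + (r^2*b - b^3/3)*(π - 4*Real.arctan (Real.sqrt (r^2-1-b^2)))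
        - (8/3)*r^3*Real.arctan (b / (r * Real.sqrt (r^2-1-b^2)))) := by
    have hcg : ∀ x ∈ Set.uIcc b 1, inn x
        = 4*Real.sqrt (r^2-1-x^2) + 2*(r^2-x^2)*(π/2 - 2*Real.arctan (Real.sqrt (r^2-1-x^2))) := by
      intro x hx
      rw [Set.uIcc_of_le hb1] at hx
      have hx2 : b^2 ≤ x^2 := by nlinarith [hx.1, hx.2, hb0]
      have hx1 : x^2 ≤ 1 := by nlinarith [hx.1, hx.2, hb0]
      have hthis := inner_eval_low (t := r^2 - x^2) (by nlinarith) (by nlinarith)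
      have hre : inn x = ∫ y in (-1:ℝ)..1, 2 * min 1 (Real.sqrt (r^2 - x^2 - y^2)) := rfl
      rw [hre, hthis, show r^2 - x^2 - 1 = r^2-1-x^2 by ring]
    rw [intervalIntegral.integral_congr hcg]
    exact intervalIntegral.integral_eq_sub_of_hasDerivAt
      (fun x hx => by
        rw [Set.uIcc_of_le hb1] at hx
        exact hasDerivAt_H r hr1 x (by nlinarith [hx.1, hx.2, hb0]))
      (by
        have csq : Continuous fun x : ℝ => Real.sqrt (r^2-1-x^2) := by fun_prop
        have carc : Continuous fun x : ℝ => Real.arctan (Real.sqrt (r^2-1-x^2)) :=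
          Real.continuous_arctan.comp csq
        have c1 : Continuous fun x : ℝ => 2*(r^2-x^2) := by fun_prop
        have c2 : Continuous fun x : ℝ => π/2 - 2*Real.arctan (Real.sqrt (r^2-1-x^2)) :=
          continuous_const.sub (continuous_const.mul carc)
        exact ((continuous_const.mul csq).add (c1.mul c2)).intervalIntegrable _ _)
  -- left piece equals right piece
  have hpt : ∀ x : ℝ, inn (-x) = inn x := by
    intro x
    show (∫ y in (-1:ℝ)..1, 2 * min 1 (Real.sqrt (r^2 - (-x)^2 - y^2))) = _
    simp only [neg_sq]; rfl
  have hleft : ∫ x in (-1:ℝ)..(-b), inn x = ∫ x in (b:ℝ)..1, inn x := by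
    rw [← intervalIntegral.integral_comp_neg (a := b) (b := 1) inn]
    exact intervalIntegral.integral_congr fun x _ => hpt x
  -- evaluate the sqrt's
  have e1 : Real.sqrt (r^2-1-1^2) = b := by
    rw [show r^2-1-1^2 = r^2-2 by ring]
  have e2 : Real.sqrt (r^2-1-b^2) = 1 := by
    rw [show r^2-1-b^2 = 1 by nlinarith [hb2]]; exact Real.sqrt_one
  -- arctan identities
  have idQ : Real.arctan ((3-r^2)/(2*b)) = π/2 - 2*Real.arctan b := by
    have h1 : Real.arctan b⁻¹ + Real.arctan (-b)
        = Real.arctan ((b⁻¹ + -b)/(1 - b⁻¹ * -b)) :=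
      Real.arctan_add (by rw [show b⁻¹ * -b = -1 by field_simp]; norm_num)
    rw [Real.arctan_neg, Real.arctan_inv_of_pos hb0] at h1
    rw [show (3-r^2)/(2*b) = (b⁻¹ + -b)/(1 - b⁻¹ * -b) by
      rw [show b⁻¹ * -b = -1 by field_simp]
      field_simp
      nlinarith [hb2]]
    linarith [h1]
  have idR : Real.arctan (1/(r*b)) - Real.arctan (b/r)
      = Real.arctan (r*(3-r^2)/((r^2+1)*b)) := by
    have h1 : Real.arctan (1/(r*b)) + Real.arctan (-(b/r))
        = Real.arctan ((1/(r*b) + -(b/r))/(1 - 1/(r*b) * -(b/r))) :=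
      Real.arctan_add (by
        rw [show 1/(r*b) * -(b/r) = -(1/r^2) by field_simp]
        have : 0 < 1/r^2 := by positivity
        linarith)
    rw [Real.arctan_neg] at h1
    rw [show (1:ℝ)/(r*b) + -(b/r) = (3-r^2)/(r*b) by
        rw [show (3:ℝ) - r^2 = 1 - b^2 by linarith [hb2]]; field_simp; ring,
      show (1:ℝ) - 1/(r*b) * -(b/r) = (r^2+1)/r^2 by field_simp; ring] at h1
    rw [show r*(3-r^2)/((r^2+1)*b) = (3-r^2)/(r*b) / ((r^2+1)/r^2) by
      rw [div_div_div_comm, div_eq_div_iff (by positivity) (by positivity)]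
      field_simp]
    linarith [h1]
  -- sqrt(D^2-8) = 2b etc.
  have hD8 : Real.sqrt (D^2 - 8) = 2*b := by
    rw [show D^2 - 8 = 4*(r^2-2) by rw [hDr]; ring, show (4:ℝ) = 2^2 by norm_num,
      Real.sqrt_mul (by positivity) _, Real.sqrt_sq (by norm_num : (0:ℝ) ≤ 2)]
  have hargQ : (12 - D^2)/(4*Real.sqrt (D^2-8)) = (3-r^2)/(2*b) := by
    rw [hD8, hDr, div_eq_div_iff (by positivity) (by positivity)]
    ring
  have hargR : D*(12 - D^2)/((D^2+4)*Real.sqrt (D^2-8)) = r*(3-r^2)/((r^2+1)*b) := by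
    rw [hD8, hDr, div_eq_div_iff (by positivity) (by positivity)]
    ring
  calc ∫ x in (-1:ℝ)..1, inn x
      = (∫ x in (b:ℝ)..1, inn x) + 8*b + (∫ x in (b:ℝ)..1, inn x) := by
        rw [hsplit, hmid, hleft]
    _ = 4 * Real.sqrt (D ^ 2 - 8)
        + (3 * D ^ 2 - 4) * Real.arctan ((12 - D ^ 2) / (4 * Real.sqrt (D ^ 2 - 8)))
        - (2 / 3) * D ^ 3
            * Real.arctan (D * (12 - D ^ 2) / ((D ^ 2 + 4) * Real.sqrt (D ^ 2 - 8))) := by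
        rw [hright, e1, e2, hargQ, hargR, hD8, idQ, ← idR]
        rw [show b/1 = b by ring, show (1:ℝ)/b = b⁻¹ by ring, Real.arctan_inv_of_pos hb0,
          show b/(r*1) = b/r by ring, Real.arctan_one, hDr]
        ring

lemma volume_cap (r : ℝ) (hr2 : 2 < r^2) (hr3 : r^2 ≤ 3) (hr0 : 0 < r) :
    volume (Metric.closedBall (0 : EuclideanSpace ℝ (Fin 3)) r ∩ {x | ∀ i, |x i| ≤ 1})
      = ENNReal.ofReal
          (∫ x in (-1:ℝ)..1, ∫ y in (-1:ℝ)..1, 2 * min 1 (Real.sqrt (r^2 - x^2 - y^2))) := by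
  classical
  set e := (MeasurableEquiv.toLp 2 (Fin 3 → ℝ)).symm with he
  set f1 := MeasurableEquiv.piFinSuccAbove (fun _ : Fin 3 => ℝ) 0 with hf1
  set f2 := MeasurableEquiv.finTwoArrow (α := ℝ) with hf2
  have mp : MeasurePreserving ((Prod.map (@id ℝ) f2) ∘ f1 ∘ e) volume volume := by
    have m1 := EuclideanSpace.volume_preserving_symm_measurableEquiv_toLp (Fin 3)
    have m2 := MeasureTheory.volume_preserving_piFinSuccAbove (fun _ : Fin 3 => ℝ) 0
    have m3 := MeasureTheory.volume_preserving_finTwoArrow ℝ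
    exact ((MeasurePreserving.id volume).prod m3).comp (m2.comp m1)
  set W : Set (ℝ × ℝ × ℝ) :=
    {p | |p.1| ≤ 1 ∧ |p.2.1| ≤ 1 ∧ |p.2.2| ≤ 1 ∧ p.1^2 + p.2.1^2 + p.2.2^2 ≤ r^2} with hW
  have hWm : MeasurableSet W := by
    have h1 : MeasurableSet {p : ℝ × ℝ × ℝ | |p.1| ≤ 1} :=
      measurableSet_le (by fun_prop : Measurable fun p : ℝ × ℝ × ℝ => |p.1|) measurable_const
    have h2 : MeasurableSet {p : ℝ × ℝ × ℝ | |p.2.1| ≤ 1} :=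
      measurableSet_le (by fun_prop : Measurable fun p : ℝ × ℝ × ℝ => |p.2.1|) measurable_const
    have h3 : MeasurableSet {p : ℝ × ℝ × ℝ | |p.2.2| ≤ 1} :=
      measurableSet_le (by fun_prop : Measurable fun p : ℝ × ℝ × ℝ => |p.2.2|) measurable_const
    have h4 : MeasurableSet {p : ℝ × ℝ × ℝ | p.1^2 + p.2.1^2 + p.2.2^2 ≤ r^2} :=
      measurableSet_le (by fun_prop : Measurable fun p : ℝ × ℝ × ℝ => p.1^2 + p.2.1^2 + p.2.2^2)
        measurable_const
    have : W = {p : ℝ × ℝ × ℝ | |p.1| ≤ 1} ∩ ({p | |p.2.1| ≤ 1} ∩ ({p | |p.2.2| ≤ 1} ∩ {p | p.1^2 + p.2.1^2 + p.2.2^2 ≤ r^2})) := by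
      ext p; simp [hW, Set.mem_setOf_eq, and_assoc]
    rw [this]
    exact h1.inter (h2.inter (h3.inter h4))
  have hpre : ((Prod.map (@id ℝ) f2) ∘ f1 ∘ e) ⁻¹' W
      = Metric.closedBall (0 : EuclideanSpace ℝ (Fin 3)) r ∩ {x | ∀ i, |x i| ≤ 1} := by
    ext x
    have hx0 : ((Prod.map (@id ℝ) f2) ∘ f1 ∘ e) x = (x 0, (x 1, x 2)) := rfl
    have hnorm : ‖x‖ ≤ r ↔ x 0^2 + x 1^2 + x 2^2 ≤ r^2 := by
      rw [EuclideanSpace.norm_eq]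
      have hss : ∑ i, ‖x i‖^2 = x 0^2 + x 1^2 + x 2^2 := by
        rw [Fin.sum_univ_three]; simp [Real.norm_eq_abs, sq_abs]
      rw [hss]
      have hS : (0:ℝ) ≤ x 0^2 + x 1^2 + x 2^2 := by positivity
      constructor
      · intro h
        nlinarith [Real.sq_sqrt hS, Real.sqrt_nonneg (x 0^2 + x 1^2 + x 2^2)]
      · intro h
        rw [show r = Real.sqrt (r^2) by rw [Real.sqrt_sq hr0.le]]
        exact Real.sqrt_le_sqrt h
    simp only [Set.mem_preimage, hx0, hW, Set.mem_setOf_eq, Set.mem_inter_iff,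
      Metric.mem_closedBall, dist_zero_right]
    constructor
    · rintro ⟨h0, h1, h2, hs⟩
      exact ⟨hnorm.mpr hs, fun i => by fin_cases i <;> assumption⟩
    · rintro ⟨hn, hc⟩
      exact ⟨hc 0, hc 1, hc 2, hnorm.mp hn⟩
  rw [← hpre, mp.measure_preimage hWm.nullMeasurableSet]
  -- the inner function
  set inn : ℝ → ℝ := fun x => ∫ y in (-1:ℝ)..1, 2 * min 1 (Real.sqrt (r^2 - x^2 - y^2))
    with hinn
  have hcont : Continuous inn := by
    apply intervalIntegral.continuous_parametric_intervalIntegral_of_continuous'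
    fun_prop
  have hinn_nonneg : ∀ x, 0 ≤ inn x := by
    intro x
    apply intervalIntegral.integral_nonneg (by norm_num)
    intro y _
    have : 0 ≤ Real.sqrt (r^2 - x^2 - y^2) := Real.sqrt_nonneg _
    simp only [le_min_iff] at *
    positivity
  -- slice computation
  have key2 : ∀ x : ℝ, (volume : Measure (ℝ × ℝ)) (Prod.mk x ⁻¹' W)
      = Set.indicator (Set.Icc (-1:ℝ) 1) (fun x' => ENNReal.ofReal (inn x')) x := by
    intro x
    by_cases hx : |x| ≤ 1
    · have hxm : x ∈ Set.Icc (-1:ℝ) 1 := by rw [Set.mem_Icc, ← abs_le]; exact hx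
      rw [Set.indicator_of_mem hxm]
      have hslm : MeasurableSet (Prod.mk x ⁻¹' W) := hWm.preimage measurable_prodMk_left
      rw [MeasureTheory.Measure.volume_eq_prod, MeasureTheory.Measure.prod_apply hslm]
      have hz : ∀ y : ℝ, volume (Prod.mk y ⁻¹' (Prod.mk x ⁻¹' W))
          = Set.indicator (Set.Icc (-1:ℝ) 1)
              (fun y' => ENNReal.ofReal (2 * min 1 (Real.sqrt (r^2 - x^2 - y'^2)))) y := by
        intro y
        by_cases hy : |y| ≤ 1
        · have hym : y ∈ Set.Icc (-1:ℝ) 1 := by rw [Set.mem_Icc, ← abs_le]; exact hy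
          rw [Set.indicator_of_mem hym]
          have hq : 0 < r^2 - x^2 - y^2 := by
            have : x^2 ≤ 1 := by rw [← sq_abs]; nlinarith [abs_nonneg x]
            have : y^2 ≤ 1 := by rw [← sq_abs]; nlinarith [abs_nonneg y]
            nlinarith
          set m : ℝ := min 1 (Real.sqrt (r^2 - x^2 - y^2)) with hm
          have hseteq : (Prod.mk y ⁻¹' (Prod.mk x ⁻¹' W)) = Set.Icc (-m) m := by
            ext z
            simp only [Set.mem_preimage, hW, Set.mem_setOf_eq, Set.mem_Icc]
            constructor
            · rintro ⟨-, -, hz1, hzs⟩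
              have : |z| ≤ Real.sqrt (r^2 - x^2 - y^2) := by
                rw [show |z| = Real.sqrt (z^2) by rw [Real.sqrt_sq_eq_abs]]
                apply Real.sqrt_le_sqrt; nlinarith
              have : |z| ≤ m := le_min hz1 this
              exact abs_le.mp this
            · rintro ⟨hz1, hz2⟩
              have hzm : |z| ≤ m := abs_le.mpr ⟨hz1, hz2⟩
              have hz1' : |z| ≤ 1 := le_trans hzm (min_le_left _ _)
              have hzq : |z| ≤ Real.sqrt (r^2 - x^2 - y^2) := le_trans hzm (min_le_right _ _)
              have hzz : z^2 ≤ r^2 - x^2 - y^2 := by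
                nlinarith [sq_abs z, Real.sq_sqrt hq.le, abs_nonneg z, Real.sqrt_nonneg (r^2 - x^2 - y^2)]
              exact ⟨hx, hy, hz1', by nlinarith⟩
          rw [hseteq, Real.volume_Icc]
          congr 1; ring
        · have hym : y ∉ Set.Icc (-1:ℝ) 1 := by rw [Set.mem_Icc, ← abs_le]; exact hy
          rw [Set.indicator_of_notMem hym]
          have : (Prod.mk y ⁻¹' (Prod.mk x ⁻¹' W)) = ∅ := by
            ext z
            simp only [Set.mem_preimage, hW, Set.mem_setOf_eq, Set.mem_empty_iff_false, iff_false]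
            rintro ⟨-, h1, -, -⟩
            exact hy h1
          rw [this, measure_empty]
      rw [lintegral_congr hz, lintegral_indicator measurableSet_Icc _]
      rw [← MeasureTheory.ofReal_integral_eq_lintegral_ofReal
        ((by fun_prop : Continuous fun y : ℝ =>
          2 * min 1 (Real.sqrt (r^2 - x^2 - y^2))).integrableOn_Icc)
        (Filter.Eventually.of_forall fun y => by
          have : 0 ≤ Real.sqrt (r^2 - x^2 - y^2) := Real.sqrt_nonneg _
          positivity)]
      congr 1
      rw [hinn]
      rw [MeasureTheory.integral_Icc_eq_integral_Ioc,
        ← intervalIntegral.integral_of_le (by norm_num : (-1:ℝ) ≤ 1)]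
    · have hxm : x ∉ Set.Icc (-1:ℝ) 1 := by rw [Set.mem_Icc, ← abs_le]; exact hx
      rw [Set.indicator_of_notMem hxm]
      have : (Prod.mk x ⁻¹' W) = ∅ := by
        ext q
        simp only [Set.mem_preimage, hW, Set.mem_setOf_eq, Set.mem_empty_iff_false, iff_false]
        rintro ⟨h1, -, -, -⟩
        exact hx h1
      rw [this, measure_empty]
  rw [MeasureTheory.Measure.volume_eq_prod, MeasureTheory.Measure.prod_apply hWm]
  rw [lintegral_congr key2, lintegral_indicator measurableSet_Icc _]
  rw [← MeasureTheory.ofReal_integral_eq_lintegral_ofReal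
    (hcont.integrableOn_Icc)
    (Filter.Eventually.of_forall fun x => hinn_nonneg x)]
  congr 1
  rw [MeasureTheory.integral_Icc_eq_integral_Ioc,
    ← intervalIntegral.integral_of_le (by norm_num : (-1:ℝ) ≤ 1)]

abbrev E3 := EuclideanSpace ℝ (Fin 3)

lemma packing (K : Set E3) (hKcpt : IsCompact K) (hKconv : Convex ℝ K)
    (hKsymm : K = -K)
    (hKadm : ∀ z : Fin 3 → ℤ,
      (fun i => (z i : ℝ)) ≠ (0 : EuclideanSpace ℝ (Fin 3)) →
      WithLp.toLp 2 (fun i => (z i : ℝ)) ∉ interior K)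
    (D : ℝ) (hD : D = diam K) :
    volume K ≤ volume (Metric.closedBall (0 : E3) (D/2) ∩ {x : E3 | ∀ i, |x i| ≤ 1}) := by
  classical
  -- K is inside the ball of radius D/2
  have hball : K ⊆ Metric.closedBall (0 : E3) (D/2) := by
    intro x hx
    have hx' : -x ∈ K := by
      rw [hKsymm] at hx; exact Set.mem_neg.mp hx
    have hd : dist x (-x) ≤ diam K := dist_le_diam_of_mem hKcpt.isBounded hx hx'
    have : dist x (-x) = 2 * ‖x‖ := by
      rw [dist_eq_norm, sub_neg_eq_add, ← two_smul ℝ x, norm_smul]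
      simp
    rw [mem_closedBall, dist_zero_right]
    rw [this] at hd; rw [hD]; linarith
  set U : Set E3 := interior K with hU
  have hUK : U ⊆ K := interior_subset
  have hUopen : IsOpen U := isOpen_interior
  have hUconv : Convex ℝ U := hKconv.interior
  have hUneg : ∀ x : E3, x ∈ U → -x ∈ U := by
    intro x hx
    have h1 : (Homeomorph.neg E3) ⁻¹' (interior K) = interior ((Homeomorph.neg E3) ⁻¹' K) :=
      (Homeomorph.neg E3).preimage_interior K
    have h2 : (Homeomorph.neg E3) ⁻¹' K = K := by
      nth_rewrite 2 [hKsymm]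
      rfl
    have : -x ∈ interior K ↔ x ∈ (Homeomorph.neg E3) ⁻¹' (interior K) := Iff.rfl
    rw [this, h1, h2]
    exact hx
  -- step: volume K = volume U
  have hvolKU : volume K ≤ volume U := by
    have h1 : K ⊆ U ∪ frontier K := by
      intro x hx
      by_cases h : x ∈ U
      · exact Or.inl h
      · exact Or.inr ⟨subset_closure hx, h⟩
    calc volume K ≤ volume (U ∪ frontier K) := measure_mono h1
      _ ≤ volume U + volume (frontier K) := measure_union_le _ _
      _ = volume U := by rw [hKconv.addHaar_frontier volume, add_zero]
  -- lattice translates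
  set τ : (Fin 3 → ℤ) → E3 := fun z => WithLp.toLp 2 (fun i => 2 * (z i : ℝ)) with hτ
  set C : (Fin 3 → ℤ) → Set E3 :=
    fun z => {x : E3 | ∀ i, x i - 2 * (z i : ℝ) ∈ Set.Ico (-1:ℝ) 1} with hC
  have hproj : ∀ i : Fin 3, Measurable fun x : E3 => x i := fun i => by
    exact (EuclideanSpace.proj (𝕜 := ℝ) (ι := Fin 3) i).continuous.measurable
  have hCmeas : ∀ z, MeasurableSet (C z) := by
    intro z
    have : C z = ⋂ i, (fun x : E3 => x i) ⁻¹'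
        (Set.Ico (-1 + 2*(z i : ℝ)) (1 + 2*(z i : ℝ))) := by
      ext x
      simp only [Set.mem_iInter, Set.mem_preimage, Set.mem_Ico, hC, Set.mem_setOf_eq]
      constructor
      · intro h i; have := h i; constructor <;> [linarith [(this).1]; linarith [(this).2]]
      · intro h i; have := h i; constructor <;> [linarith [(this).1]; linarith [(this).2]]
    rw [this]
    exact MeasurableSet.iInter fun i => (measurableSet_Ico).preimage (hproj i)
  -- the C z cover everything
  have hCcover : ∀ x : E3, ∃ z, x ∈ C z := by
    intro x
    refine ⟨fun i => ⌊(x i + 1)/2⌋, fun i => ?_⟩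
    have h1 := Int.floor_le ((x i + 1)/2)
    have h2 := Int.lt_floor_add_one ((x i + 1)/2)
    constructor <;> simp only [Set.mem_Ico] <;> [linarith; linarith]
  -- the C z are pairwise disjoint
  have hCdisj : Pairwise (Function.onFun Disjoint C) := by
    intro z w hzw
    rw [Function.onFun, Set.disjoint_left]
    intro x hxz hxw
    apply hzw
    funext i
    have h1 := hxz i
    have h2 := hxw i
    simp only [Set.mem_Ico] at h1 h2
    have : ((z i : ℝ) - w i) < 1 ∧ (-1:ℝ) < ((z i : ℝ) - w i) := by
      constructor <;> linarith [h1.1, h1.2, h2.1, h2.2]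
    have h3 : (z i - w i : ℤ) < 1 :=
      by exact_mod_cast (by push_cast; linarith [this.1] : ((z i - w i : ℤ):ℝ) < ((1:ℤ):ℝ))
    have h4 : (-1 : ℤ) < z i - w i :=
      by exact_mod_cast (by push_cast; linarith [this.2] : ((-1:ℤ):ℝ) < ((z i - w i : ℤ):ℝ))
    omega
  -- shifted pieces
  set V : (Fin 3 → ℤ) → Set E3 := fun z => (fun x : E3 => x + τ z) ⁻¹' (U ∩ C z) with hV
  have hτapply : ∀ z (x : E3) i, (x + τ z) i = x i + 2 * (z i : ℝ) := fun z x i => rfl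
  have hVeq : ∀ z, V z = ((fun x : E3 => x + τ z) ⁻¹' U) ∩ C 0 := by
    intro z
    ext x
    simp only [hV, Set.mem_preimage, Set.mem_inter_iff, hC, Set.mem_setOf_eq, hτapply,
      Int.cast_zero, Pi.zero_apply]
    constructor
    · rintro ⟨h1, h2⟩
      refine ⟨h1, fun i => ?_⟩
      have := h2 i
      simp only [Set.mem_Ico] at this ⊢
      constructor <;> [linarith [this.1]; linarith [this.2]]
    · rintro ⟨h1, h2⟩
      refine ⟨h1, fun i => ?_⟩
      have := h2 i
      simp only [Set.mem_Ico] at this ⊢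
      constructor <;> [linarith [this.1]; linarith [this.2]]
  -- V z are pairwise disjoint
  have hVdisj : Pairwise (Function.onFun Disjoint V) := by
    intro z w hzw
    rw [Function.onFun, Set.disjoint_left]
    intro y hyz hyw
    rw [hV] at hyz hyw
    simp only [Set.mem_preimage, Set.mem_inter_iff] at hyz hyw
    have hu : y + τ z ∈ U := hyz.1
    have hv : y + τ w ∈ U := hyw.1
    have hnv : -(y + τ w) ∈ U := hUneg _ hv
    have hmid : (1/2 : ℝ) • (y + τ z) + (1/2 : ℝ) • (-(y + τ w)) ∈ U :=
      hUconv hu hnv (by norm_num) (by norm_num) (by norm_num)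
    have hmideq : (1/2 : ℝ) • (y + τ z) + (1/2 : ℝ) • (-(y + τ w))
        = WithLp.toLp 2 (fun i => ((z - w) i : ℝ)) := by
      ext i
      simp only [PiLp.add_apply, PiLp.smul_apply, PiLp.neg_apply, smul_eq_mul, hτapply,
        Pi.sub_apply, PiLp.toLp_apply]
      push_cast
      ring
    rw [hmideq] at hmid
    have hne : (fun i => ((z - w) i : ℝ)) ≠ (0 : E3) := by
      intro h0
      apply hzw
      funext i
      have h5 : ((z i : ℝ) - (w i : ℝ)) = 0 := by
        have h := congrFun h0 i
        have h6 : ((z - w) i : ℝ) = (0 : ℝ) := by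
          rw [h]; rfl
        push_cast [Pi.sub_apply] at h6
        linarith [h6]
      have : z i = w i := by exact_mod_cast sub_eq_zero.mp h5
      omega
    exact hKadm (z - w) hne hmid
  -- each V z is within ball ∩ cube
  have hVsub : ∀ z, V z ⊆ Metric.closedBall (0 : E3) (D/2) ∩ {x : E3 | ∀ i, |x i| ≤ 1} := by
    intro z y hy
    rw [hVeq] at hy
    obtain ⟨h1, h2⟩ := hy
    have hcoord : ∀ i, -1 ≤ y i ∧ y i < 1 := by
      intro i
      have := h2 i
      simp only [hC, Set.mem_setOf_eq, Set.mem_Ico, Int.cast_zero, Pi.zero_apply] at this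
      constructor <;> [linarith [this.1]; linarith [this.2]]
    constructor
    · -- in the ball
      have hyU : y + τ z ∈ U := h1
      have hyK : y + τ z ∈ Metric.closedBall (0 : E3) (D/2) := hball (hUK hyU)
      rw [mem_closedBall, dist_zero_right] at hyK ⊢
      refine le_trans ?_ hyK
      rw [EuclideanSpace.norm_eq, EuclideanSpace.norm_eq]
      apply Real.sqrt_le_sqrt
      apply Finset.sum_le_sum
      intro i _
      have hci := hcoord i
      rw [hτapply]
      rcases eq_or_ne (z i) 0 with hz0 | hz0
      · simp [hz0]
      · have habs : (1:ℝ) ≤ |(z i : ℝ)| := by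
          have := Int.one_le_abs hz0
          calc (1:ℝ) = ((1:ℤ):ℝ) := by norm_num
            _ ≤ ((|z i| : ℤ) : ℝ) := by exact_mod_cast this
            _ = |(z i : ℝ)| := by push_cast; ring
        simp only [Real.norm_eq_abs, sq_abs]
        nlinarith [le_abs_self ((z i : ℝ)), neg_abs_le ((z i : ℝ)), sq_abs ((z i : ℝ)),
          hci.1, hci.2]
    · -- in the cube
      intro i
      have := hcoord i
      exact abs_le.mpr ⟨this.1, le_of_lt this.2⟩
  -- put it together
  have hUmeas : MeasurableSet U := hUopen.measurableSet
  have hUCmeas : ∀ z, MeasurableSet (U ∩ C z) := fun z => hUmeas.inter (hCmeas z)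
  have hVmeas : ∀ z, MeasurableSet (V z) := by
    intro z
    rw [hV]
    exact (hUCmeas z).preimage (measurable_id.add_const (τ z))
  have hUsplit : U = ⋃ z, (U ∩ C z) := by
    ext x
    simp only [Set.mem_iUnion, Set.mem_inter_iff]
    constructor
    · intro hx
      obtain ⟨z, hz⟩ := hCcover x
      exact ⟨z, hx, hz⟩
    · rintro ⟨z, hz, -⟩; exact hz
  have hUCdisj : Pairwise (Function.onFun Disjoint (fun z => U ∩ C z)) := by
    intro z w hzw
    exact Set.disjoint_of_subset Set.inter_subset_right Set.inter_subset_right (hCdisj hzw)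
  have htrans : ∀ z, volume (U ∩ C z) = volume (V z) := by
    intro z
    rw [hV]
    exact (measure_preimage_add_right volume (τ z) (U ∩ C z)).symm
  calc volume K ≤ volume U := hvolKU
    _ = volume (⋃ z, (U ∩ C z)) := by rw [← hUsplit]
    _ = ∑' z, volume (U ∩ C z) := measure_iUnion hUCdisj hUCmeas
    _ = ∑' z, volume (V z) := tsum_congr htrans
    _ = volume (⋃ z, V z) := (measure_iUnion hVdisj hVmeas).symm
    _ ≤ volume (Metric.closedBall (0 : E3) (D/2) ∩ {x : E3 | ∀ i, |x i| ≤ 1}) :=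
        measure_mono (Set.iUnion_subset hVsub)

end IsodiametricZ3Aux

open IsodiametricZ3Aux in
/-- Explicit isodiametric inequality for the integer lattice `ℤ³` in the range
`2√2 < D ≤ 2√3`: every centrally symmetric convex body with no nonzero integer point
in its interior and diameter `D` satisfies
`vol K ≤ 4√(D²-8) + (3D²-4)·arctan((12-D²)/(4√(D²-8)))
        - (2/3)·D³·arctan(D(12-D²)/((D²+4)√(D²-8)))`. -/
theorem isodiametric_Z3_upper_range
    (K : Set (EuclideanSpace ℝ (Fin 3)))
    (hKcpt : IsCompact K) (hKconv : Convex ℝ K) (hKsymm : K = -K)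
    (hKadm : ∀ z : Fin 3 → ℤ,
      (fun i => (z i : ℝ)) ≠ (0 : EuclideanSpace ℝ (Fin 3)) →
      WithLp.toLp 2 (fun i => (z i : ℝ)) ∉ interior K)
    (D : ℝ) (hD : D = diam K)
    (hD1 : 2 * Real.sqrt 2 < D) (hD2 : D ≤ 2 * Real.sqrt 3) :
    volume K ≤ ENNReal.ofReal
      (4 * Real.sqrt (D ^ 2 - 8)
        + (3 * D ^ 2 - 4) * Real.arctan ((12 - D ^ 2) / (4 * Real.sqrt (D ^ 2 - 8)))
        - (2 / 3) * D ^ 3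
            * Real.arctan (D * (12 - D ^ 2) / ((D ^ 2 + 4) * Real.sqrt (D ^ 2 - 8)))) := by
  have h2 : Real.sqrt 2 < D/2 := by linarith
  have h3 : D/2 ≤ Real.sqrt 3 := by linarith
  have hr0 : 0 < D/2 := lt_of_le_of_lt (Real.sqrt_nonneg 2) h2
  have hr2 : 2 < (D/2)^2 := by
    nlinarith [Real.sq_sqrt (by norm_num : (0:ℝ) ≤ 2), Real.sqrt_nonneg 2]
  have hr3 : (D/2)^2 ≤ 3 := by
    nlinarith [Real.sq_sqrt (by norm_num : (0:ℝ) ≤ 3), Real.sqrt_nonneg 3]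
  calc volume K
      ≤ volume (Metric.closedBall (0 : E3) (D/2) ∩ {x : E3 | ∀ i, |x i| ≤ 1}) :=
        packing K hKcpt hKconv hKsymm hKadm D hD
    _ = ENNReal.ofReal
          (∫ x in (-1:ℝ)..1, ∫ y in (-1:ℝ)..1, 2 * min 1 (Real.sqrt ((D/2)^2 - x^2 - y^2))) :=
        volume_cap (D/2) hr2 hr3 hr0
    _ = ENNReal.ofReal
          (4 * Real.sqrt (D ^ 2 - 8)
            + (3 * D ^ 2 - 4) * Real.arctan ((12 - D ^ 2) / (4 * Real.sqrt (D ^ 2 - 8)))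
            - (2 / 3) * D ^ 3
                * Real.arctan (D * (12 - D ^ 2) / ((D ^ 2 + 4) * Real.sqrt (D ^ 2 - 8)))) := by
        rw [integral_eval (D/2) D h2 h3 (by ring)]
end
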